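/- arXiv:2107.06025 — 11 statements merged into one kernel-verified Lean document; each statement's English description precedes it below -/
import Mathlib

section
/- Let 0 < q < 1/2. Then for (Lebesgue-) almost every pair (T,S) ∈ (1,2) × (0,1), the polynomial P_{q,T,S}(x) = (T+S−1)x³ + (1−T−2S+q(S−1−T))x² + (S+q(T−S))x has exactly 2 distinct roots in [0,1]; equivalently, the two-dimensional Lebesgue measure of {(T,S) ∈ (1,2)×(0,1) : P_{q,T,S} has exactly 2 distinct roots in [0,1]} equals 1, and the sets where it has exactly 1 or exactly 3 such roots have measure 0. -/
open MeasureTheory Set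

/-- The cubic whose roots in `[0,1]` are the equilibria of the replicator–mutator
dynamics for the pairwise social dilemma with payoffs `a₁₁ = 1, a₁₂ = S, a₂₁ = T, a₂₂ = 0`. -/
noncomputable def P (q T S x : ℝ) : ℝ :=
  (T + S - 1) * x ^ 3 + (1 - T - 2 * S + q * (S - 1 - T)) * x ^ 2 + (S + q * (T - S)) * x

/-- Number of distinct roots of `P q T S` in the interval `[0,1]`. -/
noncomputable def nRoots (q T S : ℝ) : ℕ :=
  {x : ℝ | x ∈ Set.Icc (0 : ℝ) 1 ∧ P q T S x = 0}.ncard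

lemma key (q T S : ℝ) (hq0 : 0 < q) (hT : T ∈ Ioo (1:ℝ) 2) (hS : S ∈ Ioo (0:ℝ) 1) :
    nRoots q T S = 2 := by
  obtain ⟨hT1, hT2⟩ := hT
  obtain ⟨hS0, hS1⟩ := hS
  set a : ℝ := T + S - 1 with ha
  set b : ℝ := 1 - T - 2 * S + q * (S - 1 - T) with hb
  set c : ℝ := S + q * (T - S) with hc
  have hQ1 : a + b + c = -q := by rw [ha, hb, hc]; ring
  have haPos : 0 < a := by rw [ha]; linarith
  have hcPos : 0 < c := by
    rw [hc]
    have : 0 < q * (T - S) := mul_pos hq0 (by linarith)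
    linarith
  set Q : ℝ → ℝ := fun x => a * x ^ 2 + b * x + c with hQ
  have hPQ : ∀ x, P q T S x = x * Q x := by
    intro x; rw [P, hQ, ha, hb, hc]; ring
  have hQcont : ContinuousOn Q (Icc (0:ℝ) 1) := by fun_prop
  have hQ0 : Q 0 = c := by simp [hQ]
  have hQ1' : Q 1 = -q := by simp [hQ]; linarith
  -- existence of a root of Q in (0,1)
  have hiv : (0:ℝ) ∈ Q '' Ioo (0:ℝ) 1 := by
    apply intermediate_value_Ioo' (by norm_num : (0:ℝ) ≤ 1) hQcont
    rw [hQ0, hQ1']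
    exact ⟨by linarith, hcPos⟩
  obtain ⟨r, hrIoo, hQr⟩ := hiv
  obtain ⟨hr0, hr1⟩ := hrIoo
  -- uniqueness of roots of Q in [0,1]
  have huniq : ∀ x ∈ Icc (0:ℝ) 1, Q x = 0 → x = r := by
    intro x hx hQx
    by_contra hne
    have hQx' : a * x ^ 2 + b * x + c = 0 := hQx
    have hQr' : a * r ^ 2 + b * r + c = 0 := hQr
    have hsub : (x - r) * (a * (x + r) + b) = 0 := by linear_combination hQx' - hQr'
    have hxr : x - r ≠ 0 := sub_ne_zero.mpr hne
    have hb' : a * (x + r) + b = 0 := by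
      rcases mul_eq_zero.mp hsub with h | h
      · exact absurd h hxr
      · exact h
    have hcval : c = a * x * r := by linear_combination hQx' - x * hb'
    have : a + b + c = a * (1 - x) * (1 - r) := by linear_combination hb' + hcval
    have hnn : 0 ≤ a * (1 - x) * (1 - r) := by
      apply mul_nonneg (mul_nonneg haPos.le (by linarith [hx.2])) (by linarith)
    linarith [hQ1]
  -- the root set equals {0, r}
  have hset : {x : ℝ | x ∈ Set.Icc (0 : ℝ) 1 ∧ P q T S x = 0} = {0, r} := by
    ext x
    simp only [Set.mem_setOf_eq, Set.mem_insert_iff, Set.mem_singleton_iff]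
    constructor
    · rintro ⟨hx, hPx⟩
      rw [hPQ] at hPx
      rcases mul_eq_zero.mp hPx with h | h
      · exact Or.inl h
      · exact Or.inr (huniq x hx h)
    · rintro (rfl | rfl)
      · exact ⟨⟨le_refl 0, by norm_num⟩, by rw [hPQ]; ring⟩
      · exact ⟨⟨hr0.le, hr1.le⟩, by rw [hPQ, hQr]; ring⟩
  rw [nRoots, hset]
  exact Set.ncard_pair (by exact fun h => absurd h.symm hr0.ne')

theorem SD_two_equilibria (q : ℝ) (hq0 : 0 < q) (hq2 : q < 1 / 2) :
    volume {p : ℝ × ℝ | p.1 ∈ Ioo (1 : ℝ) 2 ∧ p.2 ∈ Ioo (0 : ℝ) 1 ∧ nRoots q p.1 p.2 = 2} = 1 ∧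
    volume {p : ℝ × ℝ | p.1 ∈ Ioo (1 : ℝ) 2 ∧ p.2 ∈ Ioo (0 : ℝ) 1 ∧ nRoots q p.1 p.2 = 1} = 0 ∧
    volume {p : ℝ × ℝ | p.1 ∈ Ioo (1 : ℝ) 2 ∧ p.2 ∈ Ioo (0 : ℝ) 1 ∧ nRoots q p.1 p.2 = 3} = 0 := by
  refine ⟨?_, ?_, ?_⟩
  · have hset : {p : ℝ × ℝ | p.1 ∈ Ioo (1 : ℝ) 2 ∧ p.2 ∈ Ioo (0 : ℝ) 1 ∧ nRoots q p.1 p.2 = 2}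
        = Ioo (1:ℝ) 2 ×ˢ Ioo (0:ℝ) 1 := by
      ext p
      simp only [Set.mem_setOf_eq, Set.mem_prod]
      exact ⟨fun h => ⟨h.1, h.2.1⟩, fun h => ⟨h.1, h.2, key q p.1 p.2 hq0 h.1 h.2⟩⟩
    rw [hset, Measure.volume_eq_prod, Measure.prod_prod, Real.volume_Ioo, Real.volume_Ioo]
    norm_num
  · have hset : {p : ℝ × ℝ | p.1 ∈ Ioo (1 : ℝ) 2 ∧ p.2 ∈ Ioo (0 : ℝ) 1 ∧ nRoots q p.1 p.2 = 1}
        = (∅ : Set (ℝ × ℝ)) := by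
      ext p
      simp only [Set.mem_setOf_eq, Set.mem_empty_iff_false, iff_false, not_and]
      intro h1 h2
      rw [key q p.1 p.2 hq0 h1 h2]; norm_num
    rw [hset, measure_empty]
  · have hset : {p : ℝ × ℝ | p.1 ∈ Ioo (1 : ℝ) 2 ∧ p.2 ∈ Ioo (0 : ℝ) 1 ∧ nRoots q p.1 p.2 = 3}
        = (∅ : Set (ℝ × ℝ)) := by
      ext p
      simp only [Set.mem_setOf_eq, Set.mem_empty_iff_false, iff_false, not_and]
      intro h1 h2
      rw [key q p.1 p.2 hq0 h1 h2]; norm_num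
    rw [hset, measure_empty]
end

section
/- Let 0 < q < 1/2. Then for (Lebesgue-) almost every pair (T,S) ∈ (0,1) × (0,1), the polynomial P_{q,T,S}(x) = (T+S−1)x³ + (1−T−2S+q(S−1−T))x² + (S+q(T−S))x has exactly 2 distinct roots in [0,1]; equivalently, the two-dimensional Lebesgue measure of {(T,S) ∈ (0,1)×(0,1) : P_{q,T,S} has exactly 2 distinct roots in [0,1]} equals 1, and the sets where it has exactly 1 or exactly 3 such roots have measure 0. -/
open MeasureTheory Set

lemma nRoots_eq_two (q T S : ℝ) (hq0 : 0 < q) (hq2 : q < 1 / 2)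
    (hT0 : 0 < T) (hT1 : T < 1) (hS0 : 0 < S) (hS1 : S < 1) : nRoots q T S = 2 := by
  set a : ℝ := T + S - 1 with ha
  set b : ℝ := 1 - T - 2 * S + q * (S - 1 - T) with hb
  set c : ℝ := S + q * (T - S) with hc
  set f : ℝ → ℝ := fun x => a * x ^ 2 + b * x + c with hf
  have hPf : ∀ x : ℝ, P q T S x = x * f x := by
    intro x; simp only [P, hf, ha, hb, hc]; ring
  have hf0 : 0 < f 0 := by
    simp only [hf, ha, hb, hc]
    nlinarith [mul_pos hq0 hT0, mul_pos hS0 (show (0:ℝ) < 1 - q by linarith)]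
  have hf1 : f 1 < 0 := by
    have h : f 1 = -q := by simp only [hf, ha, hb, hc]; ring
    rw [h]; linarith
  have hcont : ContinuousOn f (Icc 0 1) := by fun_prop
  obtain ⟨x0, hx0mem, hx0⟩ :=
    intermediate_value_Ioo' (by norm_num : (0:ℝ) ≤ 1) hcont (Set.mem_Ioo.mpr ⟨hf1, hf0⟩)
  have huniq : ∀ x ∈ Icc (0:ℝ) 1, f x = 0 → x = x0 := by
    intro x hx hfx
    by_contra hne
    have hxne : x - x0 ≠ 0 := sub_ne_zero.mpr hne
    have h1 : a * (x + x0) + b = 0 := by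
      have hprod : (x - x0) * (a * (x + x0) + b) = 0 := by
        simp only [hf] at hfx hx0
        linear_combination hfx - hx0
      rcases mul_eq_zero.mp hprod with h | h
      · exact absurd h hxne
      · exact h
    have hcc : c = a * x * x0 := by
      simp only [hf] at hfx
      linear_combination hfx - x * h1
    have hQ1 : f 1 = a * (1 - x) * (1 - x0) := by
      simp only [hf]
      linear_combination h1 + hcc
    have hQ0 : f 0 = c := by simp only [hf]; ring
    rw [hQ0, hcc] at hf0
    rw [hQ1] at hf1
    have hx00 : 0 < x0 := hx0mem.1
    have hx01 : x0 < 1 := hx0mem.2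
    have hx1 : 0 ≤ x := hx.1
    have hx2 : x ≤ 1 := hx.2
    nlinarith [mul_pos hf0 (neg_pos.mpr hf1), sq_nonneg a,
      mul_nonneg (mul_nonneg (sq_nonneg a) (mul_nonneg hx1 hx00.le))
        (mul_nonneg (by linarith : (0:ℝ) ≤ 1 - x) (by linarith : (0:ℝ) ≤ 1 - x0))]
  have hset : {x : ℝ | x ∈ Set.Icc (0 : ℝ) 1 ∧ P q T S x = 0} = {0, x0} := by
    ext x
    simp only [Set.mem_setOf_eq, Set.mem_insert_iff, Set.mem_singleton_iff]
    constructor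
    · rintro ⟨hx, hPx⟩
      rw [hPf] at hPx
      rcases mul_eq_zero.mp hPx with h | h
      · exact Or.inl h
      · exact Or.inr (huniq x hx h)
    · rintro (rfl | rfl)
      · exact ⟨Set.mem_Icc.mpr ⟨le_refl 0, by norm_num⟩, by rw [hPf]; ring⟩
      · exact ⟨⟨hx0mem.1.le, hx0mem.2.le⟩, by rw [hPf, hx0, mul_zero]⟩
  rw [nRoots, hset]
  exact Set.ncard_pair (ne_of_lt hx0mem.1)

theorem H_two_equilibria (q : ℝ) (hq0 : 0 < q) (hq2 : q < 1 / 2) :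
    volume {p : ℝ × ℝ | p.1 ∈ Ioo (0 : ℝ) 1 ∧ p.2 ∈ Ioo (0 : ℝ) 1 ∧ nRoots q p.1 p.2 = 2} = 1 ∧
    volume {p : ℝ × ℝ | p.1 ∈ Ioo (0 : ℝ) 1 ∧ p.2 ∈ Ioo (0 : ℝ) 1 ∧ nRoots q p.1 p.2 = 1} = 0 ∧
    volume {p : ℝ × ℝ | p.1 ∈ Ioo (0 : ℝ) 1 ∧ p.2 ∈ Ioo (0 : ℝ) 1 ∧ nRoots q p.1 p.2 = 3} = 0 := by
  have key : ∀ T S : ℝ, T ∈ Ioo (0:ℝ) 1 → S ∈ Ioo (0:ℝ) 1 → nRoots q T S = 2 := by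
    intro T S hT hS
    exact nRoots_eq_two q T S hq0 hq2 hT.1 hT.2 hS.1 hS.2
  refine ⟨?_, ?_, ?_⟩
  · have hset : {p : ℝ × ℝ | p.1 ∈ Ioo (0 : ℝ) 1 ∧ p.2 ∈ Ioo (0 : ℝ) 1 ∧ nRoots q p.1 p.2 = 2}
        = Ioo (0:ℝ) 1 ×ˢ Ioo (0:ℝ) 1 := by
      ext ⟨T, S⟩
      simp only [Set.mem_setOf_eq, Set.mem_prod]
      exact ⟨fun ⟨h1, h2, _⟩ => ⟨h1, h2⟩, fun ⟨h1, h2⟩ => ⟨h1, h2, key T S h1 h2⟩⟩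
    rw [hset, Measure.volume_eq_prod, Measure.prod_prod, Real.volume_Ioo]
    norm_num
  · have hset : {p : ℝ × ℝ | p.1 ∈ Ioo (0 : ℝ) 1 ∧ p.2 ∈ Ioo (0 : ℝ) 1 ∧ nRoots q p.1 p.2 = 1}
        = (∅ : Set (ℝ × ℝ)) := by
      apply Set.eq_empty_iff_forall_notMem.mpr
      rintro ⟨T, S⟩ ⟨h1, h2, h3⟩
      rw [key T S h1 h2] at h3
      exact absurd h3 (by norm_num)
    rw [hset, measure_empty]
  · have hset : {p : ℝ × ℝ | p.1 ∈ Ioo (0 : ℝ) 1 ∧ p.2 ∈ Ioo (0 : ℝ) 1 ∧ nRoots q p.1 p.2 = 3}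
        = (∅ : Set (ℝ × ℝ)) := by
      apply Set.eq_empty_iff_forall_notMem.mpr
      rintro ⟨T, S⟩ ⟨h1, h2, h3⟩
      rw [key T S h1 h2] at h3
      exact absurd h3 (by norm_num)
    rw [hset, measure_empty]
end

section
/- Let 0 < q < 1/2. Then the two-dimensional Lebesgue measure of the set of pairs (T,S) ∈ (0,1) × (−1,0) for which the polynomial P_{q,T,S}(x) = (T+S−1)x³ + (1−T−2S+q(S−1−T))x² + (S+q(T−S))x has exactly 2 distinct roots in the interval [0,1] equals q/(2(1−q)). -/
open MeasureTheory Set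

/-- The quadratic factor of `P`. -/
noncomputable def Qf (q T S x : ℝ) : ℝ :=
  (T + S - 1) * x ^ 2 + (1 - T - 2 * S + q * (S - 1 - T)) * x + (S + q * (T - S))

lemma P_eq (q T S x : ℝ) : P q T S x = x * Qf q T S x := by unfold P Qf; ring

lemma Qf_one (q T S : ℝ) : Qf q T S 1 = -q := by unfold Qf; ring

lemma Qf_zero (q T S : ℝ) : Qf q T S 0 = S + q * (T - S) := by unfold Qf; ring

lemma two_of_pos {q T S : ℝ} (hq0 : 0 < q) (hT : T ∈ Ioo (0:ℝ) 1) (hS : S ∈ Ioo (-1:ℝ) 0)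
    (hc : 0 < S + q * (T - S)) : nRoots q T S = 2 := by
  have haneg : T + S - 1 < 0 := by nlinarith [hT.2, hS.2]
  have hcont : ContinuousOn (Qf q T S) (Icc (0:ℝ) 1) := by
    apply Continuous.continuousOn; unfold Qf; continuity
  have h0mem : (0:ℝ) ∈ Ioo (Qf q T S 1) (Qf q T S 0) := by
    rw [Qf_zero, Qf_one]; exact ⟨by linarith, hc⟩
  obtain ⟨r, hr, hQr⟩ := intermediate_value_Ioo' (le_of_lt one_pos) hcont h0mem
  have hset : {x : ℝ | x ∈ Icc (0:ℝ) 1 ∧ P q T S x = 0} = {0, r} := by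
    ext x
    simp only [mem_setOf_eq, mem_insert_iff, mem_singleton_iff]
    constructor
    · rintro ⟨hx, hPx⟩
      rw [P_eq] at hPx
      rcases mul_eq_zero.1 hPx with h | hQx
      · exact Or.inl h
      · right
        rcases eq_or_lt_of_le hx.1 with h0 | hxpos
        · exfalso; rw [← h0] at hQx; rw [Qf_zero] at hQx; linarith
        by_contra hxr
        have hsum : (T + S - 1) * (x + r) + (1 - T - 2 * S + q * (S - 1 - T)) = 0 := by
          have hfac : (x - r) * ((T + S - 1) * (x + r) + (1 - T - 2 * S + q * (S - 1 - T)))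
              = 0 := by
            have : Qf q T S x - Qf q T S r = 0 := by rw [hQx, hQr]; ring
            rw [← this]; unfold Qf; ring
          rcases mul_eq_zero.1 hfac with h' | h'
          · exact absurd (sub_eq_zero.1 h') hxr
          · exact h'
        have hcax : S + q * (T - S) = (T + S - 1) * x * r := by
          have hQx' : (T + S - 1) * x ^ 2 + (1 - T - 2 * S + q * (S - 1 - T)) * x
              + (S + q * (T - S)) = 0 := hQx
          nlinarith [hsum]
        nlinarith [mul_pos hxpos hr.1]
    · rintro (h | h)
      · subst h; exact ⟨by simp, by rw [P_eq]; ring⟩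
      · subst h; exact ⟨⟨hr.1.le, hr.2.le⟩, by rw [P_eq, hQr, mul_zero]⟩
  unfold nRoots
  rw [hset]
  exact Set.ncard_pair (fun h => absurd (h ▸ hr.1) (lt_irrefl r))

lemma disc_of_two {q T S : ℝ} (hq0 : 0 < q) (hT : T ∈ Ioo (0:ℝ) 1) (hS : S ∈ Ioo (-1:ℝ) 0)
    (hc : S + q * (T - S) < 0) (hn : nRoots q T S = 2) :
    (1 - T - 2 * S + q * (S - 1 - T)) ^ 2 - 4 * (T + S - 1) * (S + q * (T - S)) = 0 := by
  have haneg : T + S - 1 < 0 := by nlinarith [hT.2, hS.2]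
  unfold nRoots at hn
  obtain ⟨u, v, huv, hs⟩ := Set.ncard_eq_two.1 hn
  have h0mem : (0:ℝ) ∈ {x : ℝ | x ∈ Icc (0:ℝ) 1 ∧ P q T S x = 0} := by
    refine ⟨by simp, by unfold P; ring⟩
  obtain ⟨x, hxmem, hxne⟩ : ∃ x, x ∈ {x : ℝ | x ∈ Icc (0:ℝ) 1 ∧ P q T S x = 0} ∧ x ≠ 0 := by
    rw [hs] at h0mem
    rcases h0mem with h | h
    · exact ⟨v, by rw [hs]; right; rfl, by rw [← h] at huv; exact fun hv => huv hv.symm⟩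
    · exact ⟨u, by rw [hs]; left; rfl, by rw [← h] at huv; exact fun hu => huv hu⟩
  obtain ⟨hxI, hPx⟩ := id hxmem
  rw [P_eq] at hPx
  have hQx : Qf q T S x = 0 := by
    rcases mul_eq_zero.1 hPx with h | h
    · exact absurd h hxne
    · exact h
  have hxpos : 0 < x := lt_of_le_of_ne hxI.1 (Ne.symm hxne)
  have hx1 : x < 1 := by
    rcases lt_or_eq_of_le hxI.2 with h | h
    · exact h
    · exfalso; rw [h] at hQx; unfold Qf at hQx; nlinarith
  have hQx' : (T + S - 1) * x ^ 2 + (1 - T - 2 * S + q * (S - 1 - T)) * x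
      + (S + q * (T - S)) = 0 := hQx
  by_cases hv : 2 * (T + S - 1) * x + (1 - T - 2 * S + q * (S - 1 - T)) = 0
  · nlinarith [hQx', hv]
  · exfalso
    set y : ℝ := -(1 - T - 2 * S + q * (S - 1 - T)) / (T + S - 1) - x with hy
    have hane : T + S - 1 ≠ 0 := ne_of_lt haneg
    have hsum : (T + S - 1) * (x + y) = -(1 - T - 2 * S + q * (S - 1 - T)) := by
      rw [hy]; field_simp; ring
    have hQy : Qf q T S y = 0 := by
      unfold Qf
      have : (T + S - 1) * y ^ 2 + (1 - T - 2 * S + q * (S - 1 - T)) * y + (S + q * (T - S))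
          = ((T + S - 1) * x ^ 2 + (1 - T - 2 * S + q * (S - 1 - T)) * x + (S + q * (T - S)))
            + (y - x) * ((T + S - 1) * (x + y) + (1 - T - 2 * S + q * (S - 1 - T))) := by ring
      rw [this, hQx', hsum]; ring
    have hyx : y ≠ x := by
      intro h
      rw [h] at hsum
      exact hv (by linear_combination hsum)
    have hcxy : S + q * (T - S) = (T + S - 1) * x * y := by nlinarith [hQx', hsum]
    have hypos : 0 < y := by
      by_contra hy0
      push_neg at hy0
      have h1 : 0 < -(T + S - 1) * x := mul_pos (by linarith) hxpos
      nlinarith [mul_nonneg h1.le (neg_nonneg.2 hy0)]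
    have hy1 : y < 1 := by
      have hQ1 : (T + S - 1) * (1 - x) * (1 - y) = -q := by nlinarith [hsum, hcxy]
      by_contra hyge
      push_neg at hyge
      nlinarith [mul_nonneg (mul_pos (show (0:ℝ) < -(T + S - 1) by linarith)
        (show (0:ℝ) < 1 - x by linarith)).le (show (0:ℝ) ≤ y - 1 by linarith)]
    have hymem : y ∈ {x : ℝ | x ∈ Icc (0:ℝ) 1 ∧ P q T S x = 0} :=
      ⟨⟨hypos.le, hy1.le⟩, by rw [P_eq, hQy, mul_zero]⟩
    rw [hs] at h0mem hymem hxmem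
    have hyne0 : y ≠ 0 := ne_of_gt hypos
    simp only [mem_insert_iff, mem_singleton_iff] at h0mem hymem hxmem
    rcases h0mem with h0 | h0 <;> rcases hxmem with hx' | hx' <;>
      rcases hymem with hy' | hy' <;>
      first
      | exact hxne (hx'.trans h0.symm)
      | exact hyne0 (hy'.trans h0.symm)
      | exact hyx (hy'.trans hx'.symm)

lemma quad_finite (α β γ : ℝ) (hα : α ≠ 0) : {x : ℝ | α*x^2 + β*x + γ = 0}.Finite := by
  apply Set.Finite.subset ((Set.finite_singleton ((-Real.sqrt (β^2-4*α*γ) - β)/(2*α))).insert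
    ((Real.sqrt (β^2-4*α*γ) - β)/(2*α)))
  intro x hx
  simp only [mem_setOf_eq] at hx
  have key : (2*α*x+β)^2 = β^2 - 4*α*γ := by linear_combination 4*α*hx
  have hd : 0 ≤ β^2 - 4*α*γ := key ▸ sq_nonneg _
  have hs : Real.sqrt (β^2-4*α*γ)^2 = β^2-4*α*γ := Real.sq_sqrt hd
  have hfac : (2*α*x+β - Real.sqrt (β^2-4*α*γ))*(2*α*x+β + Real.sqrt (β^2-4*α*γ)) = 0 := by
    linear_combination key - hs
  rcases mul_eq_zero.1 hfac with h | h
  · apply Set.mem_insert_iff.2; left; field_simp; linear_combination h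
  · apply Set.mem_insert_iff.2; right; simp only [mem_singleton_iff]; field_simp
    linear_combination h

lemma null_of_slices (f : ℝ × ℝ → ℝ) (hf : Continuous f)
    (h : ∀ T, {S : ℝ | f (T, S) = 0}.Finite) : volume {p : ℝ × ℝ | f p = 0} = 0 := by
  have hm : MeasurableSet {p : ℝ × ℝ | f p = 0} :=
    hf.measurable (measurableSet_singleton 0)
  rw [show (volume : Measure (ℝ × ℝ)) = (volume : Measure ℝ).prod volume from
    MeasureTheory.Measure.volume_eq_prod ℝ ℝ, MeasureTheory.Measure.measure_prod_null hm]
  filter_upwards with T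
  have : (Prod.mk T ⁻¹' {p : ℝ × ℝ | f p = 0}) = {S : ℝ | f (T, S) = 0} := rfl
  rw [this]
  exact (h T).measure_zero volume

lemma area_lemma {q : ℝ} (hq0 : 0 < q) (hq2 : q < 1/2) :
    volume {p : ℝ × ℝ | p.1 ∈ Ioo (0:ℝ) 1 ∧ p.2 ∈ Ioo (-1:ℝ) 0 ∧
        0 < p.2 + q * (p.1 - p.2)} = ENNReal.ofReal (q / (2 * (1 - q))) := by
  have h1q : 0 < 1 - q := by linarith
  set f : ℝ → ℝ := fun T => -q * T / (1 - q) with hf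
  have hseteq : {p : ℝ × ℝ | p.1 ∈ Ioo (0:ℝ) 1 ∧ p.2 ∈ Ioo (-1:ℝ) 0 ∧
      0 < p.2 + q * (p.1 - p.2)} = regionBetween f (fun _ => 0) (Ioo 0 1) := by
    ext p
    simp only [regionBetween, mem_setOf_eq, mem_Ioo, hf]
    constructor
    · rintro ⟨hT, ⟨hS1, hS2⟩, hc⟩
      refine ⟨hT, ?_, hS2⟩
      rw [div_lt_iff₀ h1q]
      nlinarith
    · rintro ⟨hT, hfS, hS2⟩
      rw [div_lt_iff₀ h1q] at hfS
      refine ⟨hT, ⟨?_, hS2⟩, by nlinarith⟩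
      nlinarith [hT.1, hT.2]
  rw [hseteq, MeasureTheory.Measure.volume_eq_prod]
  have hfc : Continuous f := by fun_prop
  have hfint : IntegrableOn f (Ioo 0 1) volume :=
    (hfc.integrableOn_Icc (a := 0) (b := 1)).mono_set Ioo_subset_Icc_self
  have hgint : IntegrableOn (fun _ : ℝ => (0:ℝ)) (Ioo 0 1) volume :=
    integrableOn_const (by simp)
  rw [volume_regionBetween_eq_integral hfint hgint measurableSet_Ioo
    (fun x hx => div_nonpos_iff.2 (Or.inr ⟨by nlinarith [hx.1], h1q.le⟩))]
  have hint1 : ∫ (y : ℝ) in Ioo (0:ℝ) 1, ((fun _ : ℝ => (0:ℝ)) - f) y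
      = ∫ (y : ℝ) in Ioo (0:ℝ) 1, (q / (1 - q)) * y := by
    apply integral_congr_ae
    filter_upwards with y
    show (0:ℝ) - f y = q / (1 - q) * y
    rw [hf]
    field_simp
    ring
  have hint2 : ∫ (y : ℝ) in Ioo (0:ℝ) 1, y = 1/2 := by
    rw [← integral_Ioc_eq_integral_Ioo, ← intervalIntegral.integral_of_le zero_le_one,
      integral_id]
    norm_num
  rw [hint1, MeasureTheory.integral_const_mul, hint2,
    show q / (1 - q) * (1/2) = q / (2 * (1 - q)) by rw [div_mul_div_comm]; ring_nf]

theorem SH_two_equilibria (q : ℝ) (hq0 : 0 < q) (hq2 : q < 1 / 2) :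
    volume {p : ℝ × ℝ | p.1 ∈ Ioo (0 : ℝ) 1 ∧ p.2 ∈ Ioo (-1 : ℝ) 0 ∧ nRoots q p.1 p.2 = 2} =
      ENNReal.ofReal (q / (2 * (1 - q))) := by
  set A : Set (ℝ × ℝ) := {p : ℝ × ℝ | p.1 ∈ Ioo (0:ℝ) 1 ∧ p.2 ∈ Ioo (-1:ℝ) 0 ∧
    0 < p.2 + q * (p.1 - p.2)} with hA
  set L : Set (ℝ × ℝ) := {p : ℝ × ℝ | p.2 + q * (p.1 - p.2) = 0} with hL
  set D : Set (ℝ × ℝ) := {p : ℝ × ℝ | (1 - p.1 - 2 * p.2 + q * (p.2 - 1 - p.1)) ^ 2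
    - 4 * (p.1 + p.2 - 1) * (p.2 + q * (p.1 - p.2)) = 0} with hD
  set E : Set (ℝ × ℝ) := {p : ℝ × ℝ | p.1 ∈ Ioo (0:ℝ) 1 ∧ p.2 ∈ Ioo (-1:ℝ) 0 ∧
    nRoots q p.1 p.2 = 2} with hE
  have hAE : A ⊆ E := by
    rintro p ⟨h1, h2, h3⟩
    exact ⟨h1, h2, two_of_pos hq0 h1 h2 h3⟩
  have hEsub : E ⊆ A ∪ (L ∪ D) := by
    rintro p ⟨h1, h2, h3⟩
    rcases lt_trichotomy 0 (p.2 + q * (p.1 - p.2)) with h | h | h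
    · exact Or.inl ⟨h1, h2, h⟩
    · exact Or.inr (Or.inl h.symm)
    · exact Or.inr (Or.inr (disc_of_two hq0 h1 h2 h h3))
  have h1q : (1:ℝ) - q ≠ 0 := by intro h; rw [sub_eq_zero] at h; rw [← h] at hq2; norm_num at hq2
  have hLnull : volume L = 0 := by
    apply null_of_slices (fun p => p.2 + q * (p.1 - p.2)) (by fun_prop)
    intro T
    apply Set.Finite.subset (Set.finite_singleton (-q * T / (1 - q)))
    intro S hS
    simp only [mem_setOf_eq] at hS
    simp only [mem_singleton_iff]
    rw [eq_div_iff h1q]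
    linear_combination hS
  have hDnull : volume D = 0 := by
    apply null_of_slices
      (fun p => (1 - p.1 - 2 * p.2 + q * (p.2 - 1 - p.1)) ^ 2
        - 4 * (p.1 + p.2 - 1) * (p.2 + q * (p.1 - p.2))) (by fun_prop)
    intro T
    apply Set.Finite.subset (quad_finite (q^2) (2*q*(1-q)*(1+T))
      ((1 - T - q - q*T)^2 - 4*q*T*(T-1)) (pow_ne_zero 2 (ne_of_gt hq0)))
    intro S hS
    simp only [mem_setOf_eq] at hS ⊢
    linear_combination hS
  have hle : volume E ≤ volume A := by
    calc volume E ≤ volume (A ∪ (L ∪ D)) := measure_mono hEsub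
      _ ≤ volume A + volume (L ∪ D) := measure_union_le _ _
      _ ≤ volume A + (volume L + volume D) := by gcongr; exact measure_union_le _ _
      _ = volume A := by rw [hLnull, hDnull]; simp
  have hge : volume A ≤ volume E := measure_mono hAE
  rw [show volume E = volume A from le_antisymm hle hge]
  exact area_lemma hq0 hq2
end

section
/- Let 0 < q < 1/2. Let D = {(x,y) ∈ ℝ² : −1 < x < 0 and −x²/(4q) − q < y < −q}, and let D₁ be the interior of the convex hull of the four points A = (−1,−1), B = (−(1−q),−q), O = (0,0), C = (−q,−(1−q)). Then the two-dimensional Lebesgue measure of {(T,S) ∈ (0,1)×(−1,0) : P_{q,T,S} has exactly 3 distinct roots in [0,1]} equals (1/(1−2q)) times the two-dimensional Lebesgue measure of D ∩ D₁. -/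
open MeasureTheory Set

private lemma aux_sq_lt {d b : ℝ} (hd : 0 ≤ d) (hb : 0 < b) (h : d ^ 2 < b ^ 2) : d < b := by
  nlinarith

lemma nRoots_eq_three_iff {q T S : ℝ} (hq0 : 0 < q) (hq1 : q < 1) (hT0 : 0 < T) (hT1 : T < 1)
    (hS0 : -1 < S) (hS1 : S < 0) :
    nRoots q T S = 3 ↔
      (S + q * (T - S) < 0 ∧
        0 < (1 - T - 2 * S + q * (S - 1 - T)) ^ 2 - 4 * (T + S - 1) * (S + q * (T - S))) := by
  set a : ℝ := T + S - 1 with ha_def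
  set b : ℝ := 1 - T - 2 * S + q * (S - 1 - T) with hb_def
  set c : ℝ := S + q * (T - S) with hc_def
  have ha : a < 0 := by rw [ha_def]; linarith
  have ha' : a ≠ 0 := ne_of_lt ha
  have habc : a + b + c = -q := by rw [ha_def, hb_def, hc_def]; ring
  have hfac : ∀ x : ℝ, P q T S x = x * (a * x ^ 2 + b * x + c) := by
    intro x; rw [P, ha_def, hb_def, hc_def]; ring
  constructor
  · intro h
    rw [nRoots] at h
    obtain ⟨x, y, z, hxy, hxz, hyz, hset⟩ := Set.ncard_eq_three.mp h
    have key : ∀ u v : ℝ, u ∈ Set.Icc (0:ℝ) 1 → P q T S u = 0 →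
        v ∈ Set.Icc (0:ℝ) 1 → P q T S v = 0 → u ≠ v → u ≠ 0 → v ≠ 0 →
        (c < 0 ∧ 0 < b ^ 2 - 4 * a * c) := by
      intro u v hu hPu hv hPv huv hu0 hv0
      have hupos : 0 < u := lt_of_le_of_ne hu.1 (Ne.symm hu0)
      have hvpos : 0 < v := lt_of_le_of_ne hv.1 (Ne.symm hv0)
      rw [hfac] at hPu hPv
      have hQu : a * u ^ 2 + b * u + c = 0 := by
        rcases mul_eq_zero.mp hPu with h' | h'
        · exact absurd h' hu0
        · exact h'
      have hQv : a * v ^ 2 + b * v + c = 0 := by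
        rcases mul_eq_zero.mp hPv with h' | h'
        · exact absurd h' hv0
        · exact h'
      have huvne : u - v ≠ 0 := sub_ne_zero.mpr huv
      have hb' : b = -(a * (u + v)) := by
        have h1 : (b + a * (u + v)) * (u - v) = 0 := by linear_combination hQu - hQv
        rcases mul_eq_zero.mp h1 with h' | h'
        · linarith
        · exact absurd h' huvne
      have hc' : c = a * (u * v) := by linear_combination hQu - u * hb'
      constructor
      · rw [hc']; exact mul_neg_of_neg_of_pos ha (mul_pos hupos hvpos)
      · have hdisc : b ^ 2 - 4 * a * c = (a * (u - v)) ^ 2 := by rw [hb', hc']; ring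
        rw [hdisc]
        exact lt_of_le_of_ne (sq_nonneg _) (Ne.symm (pow_ne_zero 2 (mul_ne_zero ha' huvne)))
    have h0mem : (0:ℝ) ∈ {x : ℝ | x ∈ Set.Icc (0 : ℝ) 1 ∧ P q T S x = 0} := by
      refine ⟨⟨le_refl 0, by norm_num⟩, ?_⟩
      rw [hfac]; ring
    rw [hset] at h0mem
    have hxm : x ∈ Set.Icc (0:ℝ) 1 ∧ P q T S x = 0 := by
      have : x ∈ ({x, y, z} : Set ℝ) := by simp
      rw [← hset] at this; exact this
    have hym : y ∈ Set.Icc (0:ℝ) 1 ∧ P q T S y = 0 := by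
      have : y ∈ ({x, y, z} : Set ℝ) := by simp
      rw [← hset] at this; exact this
    have hzm : z ∈ Set.Icc (0:ℝ) 1 ∧ P q T S z = 0 := by
      have : z ∈ ({x, y, z} : Set ℝ) := by simp
      rw [← hset] at this; exact this
    simp only [Set.mem_insert_iff, Set.mem_singleton_iff] at h0mem
    rcases h0mem with h0 | h0 | h0
    · subst h0
      exact key y z hym.1 hym.2 hzm.1 hzm.2 hyz (Ne.symm hxy) (Ne.symm hxz)
    · subst h0
      exact key x z hxm.1 hxm.2 hzm.1 hzm.2 hxz hxy (Ne.symm hyz)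
    · subst h0
      exact key x y hxm.1 hxm.2 hym.1 hym.2 hxy hxz hyz
  · rintro ⟨hc, hdisc⟩
    have hd_nonneg : 0 ≤ b ^ 2 - 4 * a * c := le_of_lt hdisc
    set d : ℝ := Real.sqrt (b ^ 2 - 4 * a * c) with hd_def
    have hd2 : d ^ 2 = b ^ 2 - 4 * a * c := Real.sq_sqrt hd_nonneg
    have hd_pos : 0 < d := Real.sqrt_pos.mpr hdisc
    have hbc : 0 < b + 2 * c := by
      have h1 : 0 < (1 - q) * (1 - T) := mul_pos (by linarith) (by linarith)
      have h2 : 0 < q * (-S) := mul_pos hq0 (by linarith)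
      have h3 : b + 2 * c = (1 - q) * (1 - T) + q * (-S) := by rw [hb_def, hc_def]; ring
      linarith
    have hb : 0 < b := by linarith
    have h2ab : 2 * a + b < 0 := by linarith
    have hdb : d < b := by
      have hac : 0 < a * c := mul_pos_of_neg_of_neg ha hc
      have hsq : d ^ 2 < b ^ 2 := by linarith
      exact aux_sq_lt hd_pos.le hb hsq
    have hd2ab : d < -(2 * a + b) := by
      have heq : (2 * a + b) ^ 2 - d ^ 2 = 4 * (-a) * q := by
        linear_combination -hd2 + 4 * a * habc
      have hpos : 0 < 4 * (-a) * q := mul_pos (mul_pos (by norm_num) (neg_pos.mpr ha)) hq0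
      have hsq : d ^ 2 < (-(2 * a + b)) ^ 2 := by nlinarith
      exact aux_sq_lt hd_pos.le (by linarith) hsq
    have h2a : 2 * a < 0 := by linarith
    have h2a' : (2 * a) ≠ 0 := ne_of_lt h2a
    set r₁ : ℝ := (-b - d) / (2 * a) with hr₁_def
    set r₂ : ℝ := (-b + d) / (2 * a) with hr₂_def
    have hr₁_pos : 0 < r₁ := div_pos_of_neg_of_neg (by linarith) h2a
    have hr₂_pos : 0 < r₂ := div_pos_of_neg_of_neg (by linarith) h2a
    have hr₁_lt : r₁ < 1 := by
      rw [hr₁_def, div_lt_iff_of_neg h2a]; linarith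
    have hr₂_lt : r₂ < 1 := by
      rw [hr₂_def, div_lt_iff_of_neg h2a]; linarith
    have hr₁₂ : r₁ ≠ r₂ := by
      rw [hr₁_def, hr₂_def]
      intro h
      rw [div_eq_div_iff h2a' h2a'] at h
      have : d = 0 := by nlinarith
      linarith
    have hz₁ : 2 * a * r₁ + b + d = 0 := by
      rw [hr₁_def]; field_simp; ring
    have hz₂ : 2 * a * r₂ + b - d = 0 := by
      rw [hr₂_def]; field_simp; ring
    have hQr₁ : a * r₁ ^ 2 + b * r₁ + c = 0 := by
      have h1 : (4 * a) * (a * r₁ ^ 2 + b * r₁ + c) = 0 := by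
        linear_combination (2 * a * r₁ + b - d) * hz₁ + hd2
      rcases mul_eq_zero.mp h1 with h' | h'
      · exact absurd h' (by intro hh; apply ha'; linarith) 
      · exact h'
    have hQr₂ : a * r₂ ^ 2 + b * r₂ + c = 0 := by
      have h1 : (4 * a) * (a * r₂ ^ 2 + b * r₂ + c) = 0 := by
        linear_combination (2 * a * r₂ + b + d) * hz₂ + hd2
      rcases mul_eq_zero.mp h1 with h' | h'
      · exact absurd h' (by intro hh; apply ha'; linarith)
      · exact h'
    have hRS : {x : ℝ | x ∈ Set.Icc (0 : ℝ) 1 ∧ P q T S x = 0} = {0, r₁, r₂} := by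
      ext x
      simp only [Set.mem_setOf_eq, Set.mem_insert_iff, Set.mem_singleton_iff, Set.mem_Icc]
      constructor
      · rintro ⟨⟨hx0, hx1⟩, hPx⟩
        rw [hfac] at hPx
        rcases mul_eq_zero.mp hPx with h' | hQ
        · exact Or.inl h'
        · right
          have hfac2 : (2 * a * x + b + d) * (2 * a * x + b - d) = 0 := by
            linear_combination 4 * a * hQ - hd2
          rcases mul_eq_zero.mp hfac2 with h' | h'
          · left; rw [hr₁_def, eq_div_iff h2a']; linarith
          · right; rw [hr₂_def, eq_div_iff h2a']; linarith
      · rintro (rfl | rfl | rfl)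
        · exact ⟨⟨le_refl 0, by norm_num⟩, by rw [hfac]; ring⟩
        · exact ⟨⟨le_of_lt hr₁_pos, le_of_lt hr₁_lt⟩, by rw [hfac, hQr₁]; ring⟩
        · exact ⟨⟨le_of_lt hr₂_pos, le_of_lt hr₂_lt⟩, by rw [hfac, hQr₂]; ring⟩
    rw [nRoots, hRS]
    exact Set.ncard_eq_three.mpr ⟨0, r₁, r₂, Ne.symm (ne_of_gt hr₁_pos),
      Ne.symm (ne_of_gt hr₂_pos), hr₁₂, rfl⟩
lemma mem_three_iff (q T S : ℝ) (hq0 : 0 < q) (hq1 : q < 1) :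
    (T ∈ Ioo (0:ℝ) 1 ∧ S ∈ Ioo (-1:ℝ) 0 ∧ nRoots q T S = 3) ↔
    (((((1 - q) * T + q * S - (1 - q), q * T + (1 - q) * S - q) : ℝ × ℝ) ∈
        {p : ℝ × ℝ | -1 < p.1 ∧ p.1 < 0 ∧ -p.1 ^ 2 / (4 * q) - q < p.2 ∧ p.2 < -q}) ∧
      (T ∈ Ioo (0:ℝ) 1 ∧ S ∈ Ioo (-1:ℝ) 0)) := by
  simp only [Set.mem_setOf_eq, Set.mem_Ioo]
  have hkey : ((1 - q) * T + q * S - (1 - q)) ^ 2 +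
      4 * q * ((q * T + (1 - q) * S - q) + q) =
      (1 - T - 2 * S + q * (S - 1 - T)) ^ 2 - 4 * (T + S - 1) * (S + q * (T - S)) := by
    ring
  have h4q : (0:ℝ) < 4 * q := by linarith
  constructor
  · rintro ⟨⟨hT0, hT1⟩, ⟨hS0, hS1⟩, hn⟩
    obtain ⟨hcneg, hdisc⟩ := (nRoots_eq_three_iff hq0 hq1 hT0 hT1 hS0 hS1).mp hn
    refine ⟨⟨?_, ?_, ?_, ?_⟩, ⟨hT0, hT1⟩, ⟨hS0, hS1⟩⟩
    · have h1 : 0 < (1 - q) * T := mul_pos (by linarith) hT0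
      have h2 : 0 < q * (S + 1) := mul_pos hq0 (by linarith)
      nlinarith
    · have h1 : 0 < (1 - q) * (1 - T) := mul_pos (by linarith) (by linarith)
      have h2 : 0 < q * (-S) := mul_pos hq0 (by linarith)
      nlinarith
    · have h5 : -((1 - q) * T + q * S - (1 - q)) ^ 2 <
          (((q * T + (1 - q) * S - q)) + q) * (4 * q) := by nlinarith
      have h6 := (div_lt_iff₀ h4q).mpr h5
      linarith
    · nlinarith
  · rintro ⟨⟨hx1, hx0, hpar, hyq⟩, ⟨hT0, hT1⟩, ⟨hS0, hS1⟩⟩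
    refine ⟨⟨hT0, hT1⟩, ⟨hS0, hS1⟩, ?_⟩
    rw [nRoots_eq_three_iff hq0 hq1 hT0 hT1 hS0 hS1]
    constructor
    · nlinarith
    · have h6 : -((1 - q) * T + q * S - (1 - q)) ^ 2 / (4 * q) <
          (q * T + (1 - q) * S - q) + q := by linarith
      have h5 := (div_lt_iff₀ h4q).mp h6
      nlinarith
theorem SH_three_equilibria_area (q : ℝ) (hq0 : 0 < q) (hq2 : q < 1 / 2) :
    volume {p : ℝ × ℝ | p.1 ∈ Ioo (0 : ℝ) 1 ∧ p.2 ∈ Ioo (-1 : ℝ) 0 ∧ nRoots q p.1 p.2 = 3} =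
      ENNReal.ofReal (1 / (1 - 2 * q)) *
        volume ({p : ℝ × ℝ | -1 < p.1 ∧ p.1 < 0 ∧ -p.1 ^ 2 / (4 * q) - q < p.2 ∧ p.2 < -q} ∩
          interior (convexHull ℝ
            {((-1 : ℝ), (-1 : ℝ)), (-(1 - q), -q), ((0 : ℝ), (0 : ℝ)), (-q, -(1 - q))})) := by
  have hq1 : q < 1 := by linarith
  have h12q : 0 < 1 - 2 * q := by linarith
  have h12q' : (1 - 2 * q) ≠ 0 := ne_of_gt h12q
  set L : (ℝ × ℝ) →ₗ[ℝ] (ℝ × ℝ) :=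
    Matrix.toLin (Module.Basis.finTwoProd ℝ) (Module.Basis.finTwoProd ℝ) !![1 - q, q; q, 1 - q] with hL_def
  have hLapp : ∀ p : ℝ × ℝ, L p = ((1 - q) * p.1 + q * p.2, q * p.1 + (1 - q) * p.2) :=
    fun p => Matrix.toLin_finTwoProd_apply _ _ _ _ p
  have hdet : LinearMap.det L = 1 - 2 * q := by
    rw [hL_def, LinearMap.det_toLin, Matrix.det_fin_two_of]; ring
  set w : ℝ × ℝ := (-(1 - q), -q) with hw_def
  set Φ : ℝ × ℝ → ℝ × ℝ := fun p => L p + w with hΦ_def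
  have hΦapp : ∀ p : ℝ × ℝ,
      Φ p = ((1 - q) * p.1 + q * p.2 - (1 - q), q * p.1 + (1 - q) * p.2 - q) := by
    intro p
    show L p + w = _
    rw [hLapp, hw_def, Prod.mk_add_mk, Prod.mk.injEq]
    constructor <;> ring
  have hΦcont : Continuous Φ := (L.continuous_of_finiteDimensional).add continuous_const
  set Ψ : ℝ × ℝ → ℝ × ℝ := fun z =>
    (((1 - q) * (z.1 + (1 - q)) - q * (z.2 + q)) / (1 - 2 * q),
     ((1 - q) * (z.2 + q) - q * (z.1 + (1 - q))) / (1 - 2 * q)) with hΨ_def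
  have hleft : ∀ p, Ψ (Φ p) = p := by
    intro p
    rw [hΦapp, hΨ_def, Prod.ext_iff]
    constructor <;> (dsimp only; rw [div_eq_iff h12q']; ring)
  have hright : ∀ z, Φ (Ψ z) = z := by
    intro z
    rw [hΦapp, hΨ_def, Prod.ext_iff]
    constructor
    · dsimp only; linear_combination (z.1 + (1 - q)) * mul_inv_cancel₀ h12q'
    · dsimp only; linear_combination (z.2 + q) * mul_inv_cancel₀ h12q'
  set e : ℝ × ℝ ≃ₜ ℝ × ℝ :=
    { toFun := Φ, invFun := Ψ, left_inv := hleft, right_inv := hright,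
      continuous_toFun := hΦcont,
      continuous_invFun := by fun_prop } with he_def
  have hΦa : ∀ (v p : ℝ × ℝ), Φ (v + p) = L v + Φ p := by
    intro v p
    show L (v + p) + w = L v + (L p + w)
    rw [map_add]; abel
  set Φa : (ℝ × ℝ) →ᵃ[ℝ] (ℝ × ℝ) :=
    { toFun := Φ, linear := L, map_vadd' := fun p v => hΦa v p } with hΦa_def
  have hcoeA : ⇑Φa = Φ := rfl
  have hcoeE : ⇑e = Φ := rfl
  have hcorn : ({((-1 : ℝ), (-1 : ℝ)), (-(1 - q), -q), ((0 : ℝ), (0 : ℝ)), (-q, -(1 - q))} :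
      Set (ℝ × ℝ)) =
      Φ '' ({((0:ℝ), (-1:ℝ)), ((0:ℝ), (0:ℝ)), ((1:ℝ), (0:ℝ)), ((1:ℝ), (-1:ℝ))}) := by
    have e1 : Φ ((0:ℝ), (-1:ℝ)) = ((-1:ℝ), (-1:ℝ)) := by
      rw [hΦapp, Prod.mk.injEq]; constructor <;> (dsimp only; ring)
    have e2 : Φ ((0:ℝ), (0:ℝ)) = (-(1 - q), -q) := by
      rw [hΦapp, Prod.mk.injEq]; constructor <;> (dsimp only; ring)
    have e3 : Φ ((1:ℝ), (0:ℝ)) = ((0:ℝ), (0:ℝ)) := by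
      rw [hΦapp, Prod.mk.injEq]; constructor <;> (dsimp only; ring)
    have e4 : Φ ((1:ℝ), (-1:ℝ)) = (-q, -(1 - q)) := by
      rw [hΦapp, Prod.mk.injEq]; constructor <;> (dsimp only; ring)
    rw [Set.image_insert_eq, Set.image_insert_eq, Set.image_insert_eq, Set.image_singleton,
      e1, e2, e3, e4]
  have hsquare : convexHull ℝ
      ({((0:ℝ), (-1:ℝ)), ((0:ℝ), (0:ℝ)), ((1:ℝ), (0:ℝ)), ((1:ℝ), (-1:ℝ))} : Set (ℝ × ℝ)) =
      Icc (0:ℝ) 1 ×ˢ Icc (-1:ℝ) 0 := by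
    have hs : ({((0:ℝ), (-1:ℝ)), ((0:ℝ), (0:ℝ)), ((1:ℝ), (0:ℝ)), ((1:ℝ), (-1:ℝ))} :
        Set (ℝ × ℝ)) = (({0, 1} : Set ℝ) ×ˢ ({-1, 0} : Set ℝ)) := by
      ext ⟨u, v⟩
      simp only [Set.mem_insert_iff, Set.mem_singleton_iff, Set.mem_prod, Prod.mk.injEq]
      tauto
    rw [hs, convexHull_prod, convexHull_pair, convexHull_pair,
      segment_eq_Icc (by norm_num : (0:ℝ) ≤ 1), segment_eq_Icc (by norm_num : (-1:ℝ) ≤ 0)]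
  have hD1 : interior (convexHull ℝ
      ({((-1 : ℝ), (-1 : ℝ)), (-(1 - q), -q), ((0 : ℝ), (0 : ℝ)), (-q, -(1 - q))} :
        Set (ℝ × ℝ))) = Φ '' (Ioo (0:ℝ) 1 ×ˢ Ioo (-1:ℝ) 0) := by
    rw [hcorn, ← hcoeA, ← AffineMap.image_convexHull, hcoeA, ← hcoeE, ← Homeomorph.image_interior,
      hcoeE, hsquare, interior_prod_eq, interior_Icc, interior_Icc]
  have hD1mem : ∀ p : ℝ × ℝ, (Φ p ∈ interior (convexHull ℝ
      ({((-1 : ℝ), (-1 : ℝ)), (-(1 - q), -q), ((0 : ℝ), (0 : ℝ)), (-q, -(1 - q))} :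
        Set (ℝ × ℝ)))) ↔ (p.1 ∈ Ioo (0:ℝ) 1 ∧ p.2 ∈ Ioo (-1:ℝ) 0) := by
    intro p
    rw [hD1]
    constructor
    · rintro ⟨p', hp', heq⟩
      have hinj : Function.Injective Φ := by
        rw [← hcoeE]; exact e.injective
      have : p' = p := hinj heq
      subst this
      exact ⟨hp'.1, hp'.2⟩
    · intro h
      exact ⟨p, ⟨h.1, h.2⟩, rfl⟩
  have hEeq : {p : ℝ × ℝ | p.1 ∈ Ioo (0 : ℝ) 1 ∧ p.2 ∈ Ioo (-1 : ℝ) 0 ∧ nRoots q p.1 p.2 = 3} =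
      Φ ⁻¹' (({p : ℝ × ℝ | -1 < p.1 ∧ p.1 < 0 ∧ -p.1 ^ 2 / (4 * q) - q < p.2 ∧ p.2 < -q} ∩
        interior (convexHull ℝ
          {((-1 : ℝ), (-1 : ℝ)), (-(1 - q), -q), ((0 : ℝ), (0 : ℝ)), (-q, -(1 - q))}))) := by
    ext p
    obtain ⟨T, S⟩ := p
    simp only [Set.mem_setOf_eq, Set.mem_preimage, Set.mem_inter_iff]
    rw [hD1mem (T, S), hΦapp (T, S)]
    exact mem_three_iff q T S hq0 hq1
  rw [hEeq]
  haveI : (volume : Measure (ℝ × ℝ)).IsAddHaarMeasure :=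
    Measure.prod.instIsAddHaarMeasure _ _
  rw [show Φ ⁻¹' (({p : ℝ × ℝ | -1 < p.1 ∧ p.1 < 0 ∧ -p.1 ^ 2 / (4 * q) - q < p.2 ∧ p.2 < -q} ∩
        interior (convexHull ℝ
          {((-1 : ℝ), (-1 : ℝ)), (-(1 - q), -q), ((0 : ℝ), (0 : ℝ)), (-q, -(1 - q))}))) =
      ⇑L ⁻¹' ((fun z => z + w) ⁻¹'
        (({p : ℝ × ℝ | -1 < p.1 ∧ p.1 < 0 ∧ -p.1 ^ 2 / (4 * q) - q < p.2 ∧ p.2 < -q} ∩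
        interior (convexHull ℝ
          {((-1 : ℝ), (-1 : ℝ)), (-(1 - q), -q), ((0 : ℝ), (0 : ℝ)), (-q, -(1 - q))})))) from rfl]
  rw [Measure.addHaar_preimage_linearMap volume (by rw [hdet]; exact h12q')]
  congr 1
  · rw [hdet, abs_of_pos (inv_pos.mpr h12q), one_div]
  · rw [show (fun z : ℝ × ℝ => z + w) = (fun z : ℝ × ℝ => w + z) from funext fun z => add_comm _ _]
    exact measure_preimage_add volume w _
end

section
/- Let 0 < q < 1/2. Let D = {(x,y) ∈ ℝ² : −1 < x < 0 and −x²/(4q) − q < y < −q}, and let D₂ be the interior of the triangle with vertices M = (−q,−(1−q)), N = (0,−(1−2q)/(1−q)), O = (0,0). Then the two-dimensional Lebesgue measure of {(T,S) ∈ (1,2)×(−1,0) : P_{q,T,S} has exactly 3 distinct roots in [0,1]} equals (1/(1−2q)) times the two-dimensional Lebesgue measure of D ∩ D₂. -/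
open MeasureTheory Set

lemma aux_b2c {a b c q : ℝ} (hq : 0 < q) (habc : a + b + c = -q) (hb : 0 < b)
    (h2ab : 2 * a + b < 0) (hD : 0 < b ^ 2 - 4 * a * c) : 0 < b + 2 * c := by
  by_contra h
  push_neg at h
  nlinarith [mul_nonneg (neg_nonneg.mpr h) (by linarith : (0:ℝ) ≤ -(2 * a + b)),
    mul_pos hb hq]

lemma ncard_roots_iff (a b c q : ℝ) (hq : 0 < q) (habc : a + b + c = -q) :
    {x : ℝ | x ∈ Set.Icc (0:ℝ) 1 ∧ x * (a * x ^ 2 + b * x + c) = 0}.ncard = 3 ↔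
      (a < 0 ∧ 0 < b ∧ 2 * a + b < 0 ∧ c < 0 ∧ 0 < b ^ 2 - 4 * a * c) := by
  constructor
  · intro h
    obtain ⟨x, y, z, hxy, hxz, hyz, hset⟩ := Set.ncard_eq_three.mp h
    have hmem : ∀ w : ℝ, w ∈ ({x, y, z} : Set ℝ) →
        w ∈ Set.Icc (0:ℝ) 1 ∧ w * (a * w ^ 2 + b * w + c) = 0 := by
      intro w hw; rw [← hset] at hw; exact hw
    have h0 : (0:ℝ) ∈ {x : ℝ | x ∈ Set.Icc (0:ℝ) 1 ∧ x * (a * x ^ 2 + b * x + c) = 0} :=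
      ⟨⟨le_refl 0, zero_le_one⟩, by ring⟩
    rw [hset] at h0
    obtain ⟨r, s, hrs, hr0, hs0, hr, hs⟩ :
        ∃ r s : ℝ, r ≠ s ∧ r ≠ 0 ∧ s ≠ 0 ∧
          (r ∈ Set.Icc (0:ℝ) 1 ∧ r * (a * r ^ 2 + b * r + c) = 0) ∧
          (s ∈ Set.Icc (0:ℝ) 1 ∧ s * (a * s ^ 2 + b * s + c) = 0) := by
      simp only [Set.mem_insert_iff, Set.mem_singleton_iff] at h0
      rcases h0 with h0 | h0 | h0
      · exact ⟨y, z, hyz, by rw [h0]; exact (Ne.symm hxy),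
          by rw [h0]; exact (Ne.symm hxz),
          hmem y (by simp), hmem z (by simp)⟩
      · exact ⟨x, z, hxz, by rw [h0]; exact hxy,
          by rw [h0]; exact (Ne.symm hyz),
          hmem x (by simp), hmem z (by simp)⟩
      · exact ⟨x, y, hxy, by rw [h0]; exact hxz,
          by rw [h0]; exact hyz,
          hmem x (by simp), hmem y (by simp)⟩
    obtain ⟨hrIcc, hrP⟩ := hr
    obtain ⟨hsIcc, hsP⟩ := hs
    have hQr : a * r ^ 2 + b * r + c = 0 := by
      rcases mul_eq_zero.mp hrP with h | h
      · exact absurd h hr0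
      · exact h
    have hQs : a * s ^ 2 + b * s + c = 0 := by
      rcases mul_eq_zero.mp hsP with h | h
      · exact absurd h hs0
      · exact h
    have hrpos : 0 < r := lt_of_le_of_ne hrIcc.1 (Ne.symm hr0)
    have hspos : 0 < s := lt_of_le_of_ne hsIcc.1 (Ne.symm hs0)
    have hr1 : r < 1 := by
      rcases lt_or_eq_of_le hrIcc.2 with h | h
      · exact h
      · exfalso; rw [h] at hQr; nlinarith
    have hs1 : s < 1 := by
      rcases lt_or_eq_of_le hsIcc.2 with h | h
      · exact h
      · exfalso; rw [h] at hQs; nlinarith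
    have ha : a ≠ 0 := by
      intro ha0
      rw [ha0] at hQr hQs
      have h1 : b * (r - s) = 0 := by linear_combination hQr - hQs
      rcases mul_eq_zero.mp h1 with h | h
      · rw [h] at hQr; simp at hQr
        rw [ha0, h, hQr] at habc; linarith
      · exact hrs (sub_eq_zero.mp h)
    have hb' : a * (r + s) + b = 0 := by
      have h1 : (r - s) * (a * (r + s) + b) = 0 := by linear_combination hQr - hQs
      rcases mul_eq_zero.mp h1 with h | h
      · exact absurd (sub_eq_zero.mp h) hrs
      · exact h
    have hc' : c = a * r * s := by linear_combination hQr - r * hb'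
    have hkey : a * ((1 - r) * (1 - s)) = -q := by
      linear_combination habc - hb' - hc'
    have haneg : a < 0 := by
      nlinarith [mul_pos (by linarith : (0:ℝ) < 1 - r) (by linarith : (0:ℝ) < 1 - s)]
    have hbpos : 0 < b := by
      have h2 : a * (r + s) < 0 := mul_neg_of_neg_of_pos haneg (by linarith)
      linarith
    have hcneg : c < 0 := by
      have h2 : a * r * s < 0 :=
        mul_neg_of_neg_of_pos (mul_neg_of_neg_of_pos haneg hrpos) hspos
      linarith
    refine ⟨haneg, hbpos, by
      have h2 : a * (2 - (r + s)) < 0 := mul_neg_of_neg_of_pos haneg (by linarith)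
      nlinarith, hcneg, ?_⟩
    have h1 : b ^ 2 - 4 * a * c = (a * (r - s)) ^ 2 := by
      have hb2 : b = -(a * (r + s)) := by linarith
      rw [hb2, hc']; ring
    rw [h1]
    exact lt_of_le_of_ne (sq_nonneg _)
      (Ne.symm (pow_ne_zero 2 (mul_ne_zero ha (sub_ne_zero.mpr hrs))))
  · rintro ⟨ha, hb, hab, hc, hD⟩
    have ha' : a ≠ 0 := ne_of_lt ha
    have h2a : 2 * a < 0 := by linarith
    set s := Real.sqrt (b ^ 2 - 4 * a * c) with hsdef
    have hs2 : s * s = b ^ 2 - 4 * a * c := Real.mul_self_sqrt hD.le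
    have hspos : 0 < s := Real.sqrt_pos.mpr hD
    have hdis : discrim a b c = s * s := by rw [discrim]; linarith
    have hsb : s < b := by nlinarith [mul_pos_of_neg_of_neg ha hc]
    have hs2ab : s < -(2 * a + b) := by nlinarith [mul_pos_of_neg_of_neg ha (show a + b + c < 0 by linarith)]
    set r1 := (-b + s) / (2 * a) with hr1def
    set r2 := (-b - s) / (2 * a) with hr2def
    have hr1pos : 0 < r1 := div_pos_of_neg_of_neg (by linarith) h2a
    have hr2pos : 0 < r2 := div_pos_of_neg_of_neg (by linarith) h2a
    have hr1le : r1 ≤ 1 := by rw [hr1def, div_le_iff_of_neg h2a]; linarith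
    have hr2le : r2 ≤ 1 := by rw [hr2def, div_le_iff_of_neg h2a]; linarith
    have hne : r1 ≠ r2 := by
      intro h
      rw [hr1def, hr2def, div_eq_div_iff (ne_of_lt h2a) (ne_of_lt h2a)] at h
      nlinarith
    have hsetEq : {x : ℝ | x ∈ Set.Icc (0:ℝ) 1 ∧ x * (a * x ^ 2 + b * x + c) = 0}
        = {0, r1, r2} := by
      ext x
      simp only [Set.mem_setOf_eq, Set.mem_insert_iff, Set.mem_singleton_iff, Set.mem_Icc]
      constructor
      · rintro ⟨⟨hx0, hx1⟩, hxP⟩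
        rcases mul_eq_zero.mp hxP with h | h
        · exact Or.inl h
        · right
          have h' : a * (x * x) + b * x + c = 0 := by linear_combination h
          exact (quadratic_eq_zero_iff ha' hdis x).mp h'
      · rintro (rfl | rfl | rfl)
        · exact ⟨⟨le_refl _, zero_le_one⟩, by ring⟩
        · refine ⟨⟨hr1pos.le, hr1le⟩, ?_⟩
          have h' : a * (r1 * r1) + b * r1 + c = 0 :=
            (quadratic_eq_zero_iff ha' hdis r1).mpr (Or.inl rfl)
          linear_combination r1 * h'
        · refine ⟨⟨hr2pos.le, hr2le⟩, ?_⟩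
          have h' : a * (r2 * r2) + b * r2 + c = 0 :=
            (quadratic_eq_zero_iff ha' hdis r2).mpr (Or.inr rfl)
          linear_combination r2 * h'
    rw [hsetEq]
    exact Set.ncard_eq_three.mpr ⟨0, r1, r2, ne_of_lt hr1pos, ne_of_lt hr2pos, hne, rfl⟩

lemma nRoots_iff (q T S : ℝ) (hq : 0 < q) :
    nRoots q T S = 3 ↔
      (T + S - 1 < 0 ∧ 0 < 1 - T - 2 * S + q * (S - 1 - T) ∧
        2 * (T + S - 1) + (1 - T - 2 * S + q * (S - 1 - T)) < 0 ∧ S + q * (T - S) < 0 ∧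
        0 < (1 - T - 2 * S + q * (S - 1 - T)) ^ 2 - 4 * (T + S - 1) * (S + q * (T - S))) := by
  have hset : {x : ℝ | x ∈ Set.Icc (0 : ℝ) 1 ∧ P q T S x = 0} =
      {x : ℝ | x ∈ Set.Icc (0:ℝ) 1 ∧
        x * ((T + S - 1) * x ^ 2 + (1 - T - 2 * S + q * (S - 1 - T)) * x + (S + q * (T - S))) = 0} := by
    ext x
    have hPx : P q T S x =
        x * ((T + S - 1) * x ^ 2 + (1 - T - 2 * S + q * (S - 1 - T)) * x + (S + q * (T - S))) := by
      simp only [P]; ring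
    rw [Set.mem_setOf_eq, Set.mem_setOf_eq, hPx]
  unfold nRoots
  rw [hset]
  exact ncard_roots_iff _ _ _ q hq (by ring)


lemma interior_tri (q : ℝ) (hq0 : 0 < q) (hq2 : q < 1 / 2) :
    interior (convexHull ℝ
        {((-q : ℝ), -(1 - q)), ((0 : ℝ), -(1 - 2 * q) / (1 - q)), ((0 : ℝ), (0 : ℝ))}) =
      {p : ℝ × ℝ | p.1 < 0 ∧ q * p.2 < (1 - q) * p.1 ∧ q * p.1 - (1 - 2 * q) < (1 - q) * p.2} := by
  have h1q : (0:ℝ) < 1 - q := by linarith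
  have hk : (0:ℝ) < 1 - 2 * q := by linarith
  set Mv : ℝ × ℝ := ((-q : ℝ), -(1 - q)) with hMv
  set Nv : ℝ × ℝ := ((0 : ℝ), -(1 - 2 * q) / (1 - q)) with hNv
  set Ov : ℝ × ℝ := ((0 : ℝ), (0 : ℝ)) with hOv
  set G : Set (ℝ × ℝ) :=
    {p : ℝ × ℝ | p.1 < 0 ∧ q * p.2 < (1 - q) * p.1 ∧ q * p.1 - (1 - 2 * q) < (1 - q) * p.2}
    with hG
  set Gc : Set (ℝ × ℝ) :=
    {p : ℝ × ℝ | p.1 ≤ 0 ∧ q * p.2 ≤ (1 - q) * p.1 ∧ q * p.1 - (1 - 2 * q) ≤ (1 - q) * p.2}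
    with hGc
  have hGcConvex : Convex ℝ Gc := by
    intro x hx y hy α β hα hβ hαβ
    obtain ⟨hx1, hx2, hx3⟩ := hx
    obtain ⟨hy1, hy2, hy3⟩ := hy
    refine ⟨?_, ?_, ?_⟩ <;>
      simp only [Prod.fst_add, Prod.snd_add, Prod.smul_fst, Prod.smul_snd, smul_eq_mul]
    · nlinarith [mul_nonneg hα (neg_nonneg.mpr hx1), mul_nonneg hβ (neg_nonneg.mpr hy1)]
    · nlinarith [mul_le_mul_of_nonneg_left hx2 hα, mul_le_mul_of_nonneg_left hy2 hβ]
    · nlinarith [mul_le_mul_of_nonneg_left hx3 hα, mul_le_mul_of_nonneg_left hy3 hβ]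
  have hNdiv : (1 - q) * (-(1 - 2 * q) / (1 - q)) = -(1 - 2 * q) := by field_simp
  have hHullGc : convexHull ℝ {Mv, Nv, Ov} ⊆ Gc := by
    apply convexHull_min _ hGcConvex
    rintro p hp
    simp only [Set.mem_insert_iff, Set.mem_singleton_iff] at hp
    rcases hp with rfl | rfl | rfl
    · exact ⟨by simp only [hMv]; linarith,
        by simp only [hMv]; nlinarith,
        by simp only [hMv]; nlinarith⟩
    · refine ⟨by simp only [hNv]; linarith, ?_, ?_⟩
      · simp only [hNv]
        have : (0:ℝ) ≤ (1 - 2 * q) / (1 - q) := div_nonneg hk.le h1q.le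
        nlinarith
      · simp only [hNv]
        rw [hNdiv]; linarith
    · exact ⟨by simp only [hOv]; linarith, by simp only [hOv]; nlinarith,
        by simp only [hOv]; nlinarith⟩
  have hGopen : IsOpen G := by
    apply IsOpen.and
    · exact isOpen_lt (continuous_fst) continuous_const
    apply IsOpen.and
    · exact isOpen_lt (continuous_const.mul continuous_snd) (continuous_const.mul continuous_fst)
    · exact isOpen_lt ((continuous_const.mul continuous_fst).sub continuous_const)
        (continuous_const.mul continuous_snd)
  have hGsub : G ⊆ convexHull ℝ {Mv, Nv, Ov} := by
    rintro ⟨p1, p2⟩ hp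
    obtain ⟨h1, h2, h3⟩ := hp
    simp only at h1 h2 h3
    set wM : ℝ := -p1 / q with hwM
    set wN : ℝ := (1 - q) * ((1 - q) * p1 - q * p2) / (q * (1 - 2 * q)) with hwN
    set wO : ℝ := ((1 - 2 * q) - q * p1 + (1 - q) * p2) / (1 - 2 * q) with hwO
    have hsum :
        ∑ i : Fin 3, (![wM, wN, wO]) i • (![Mv, Nv, Ov]) i ∈ convexHull ℝ {Mv, Nv, Ov} := by
      apply (convex_convexHull ℝ _).sum_mem
      · intro i _
        fin_cases i <;> simp only [Matrix.cons_val_zero, Matrix.cons_val_one, Matrix.head_cons,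
          Matrix.cons_val_two, Matrix.tail_cons]
        · exact div_nonneg (by linarith) hq0.le
        · exact div_nonneg (by nlinarith) (by positivity)
        · exact div_nonneg (by nlinarith) hk.le
      · simp only [Fin.sum_univ_three, Matrix.cons_val_zero, Matrix.cons_val_one,
          Matrix.head_cons, Matrix.cons_val_two, Matrix.tail_cons, hwM, hwN, hwO]
        field_simp [hk.ne', hq0.ne', h1q.ne', ne_of_gt (by linarith : (0:ℝ) < 1 - q * 2)]
        ring
      · intro i _
        fin_cases i <;>
          exact subset_convexHull ℝ _ (by simp [Set.mem_insert_iff])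
    have heq : ∑ i : Fin 3, (![wM, wN, wO]) i • (![Mv, Nv, Ov]) i = (p1, p2) := by
      simp only [Fin.sum_univ_three, Matrix.cons_val_zero, Matrix.cons_val_one,
        Matrix.head_cons, Matrix.cons_val_two, Matrix.tail_cons, hMv, hNv, hOv,
        Prod.smul_mk, smul_eq_mul, Prod.mk_add_mk]
      rw [Prod.mk.injEq]
      constructor
      · simp only [hwM, hwN, hwO]
        field_simp [hk.ne', hq0.ne', h1q.ne']
        ring
      · simp only [hwM, hwN, hwO]
        field_simp [hk.ne', hq0.ne', h1q.ne', ne_of_gt (by linarith : (0:ℝ) < 1 - q * 2)]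
        ring
    rw [heq] at hsum
    exact hsum
  apply subset_antisymm
  · intro x hx
    rw [mem_interior_iff_mem_nhds, Metric.mem_nhds_iff] at hx
    obtain ⟨ε, hε, hball⟩ := hx
    have hpert : ∀ d1 d2 : ℝ, |d1| < ε → |d2| < ε → (x.1 + d1, x.2 + d2) ∈ Gc := by
      intro d1 d2 hd1 hd2
      apply hHullGc
      apply hball
      rw [Metric.mem_ball, Prod.dist_eq]
      simp only [Real.dist_eq]
      rw [show x.1 + d1 - x.1 = d1 by ring, show x.2 + d2 - x.2 = d2 by ring]
      exact max_lt hd1 hd2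
    have habs : |(ε/2 : ℝ)| < ε := by rw [abs_of_pos (by linarith)]; linarith
    have habs' : |(-(ε/2) : ℝ)| < ε := by rw [abs_neg, abs_of_pos (by linarith)]; linarith
    have habs0 : |(0:ℝ)| < ε := by simpa using hε
    have e1 := (hpert (ε/2) 0 habs habs0).1
    have e2 := (hpert 0 (ε/2) habs0 habs).2.1
    have e3 := (hpert 0 (-(ε/2)) habs0 habs').2.2
    simp only at e1 e2 e3
    refine ⟨by linarith, by nlinarith, by nlinarith⟩
  · exact interior_maximal hGsub hGopen

set_option maxHeartbeats 1000000 in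
theorem PD_three_equilibria_area (q : ℝ) (hq0 : 0 < q) (hq2 : q < 1 / 2) :
    volume {p : ℝ × ℝ | p.1 ∈ Ioo (1 : ℝ) 2 ∧ p.2 ∈ Ioo (-1 : ℝ) 0 ∧ nRoots q p.1 p.2 = 3} =
      ENNReal.ofReal (1 / (1 - 2 * q)) *
        volume ({p : ℝ × ℝ | -1 < p.1 ∧ p.1 < 0 ∧ -p.1 ^ 2 / (4 * q) - q < p.2 ∧ p.2 < -q} ∩
          interior (convexHull ℝ
            {((-q : ℝ), -(1 - q)), ((0 : ℝ), -(1 - 2 * q) / (1 - q)), ((0 : ℝ), (0 : ℝ))})) := by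
  have h1q : (0:ℝ) < 1 - q := by linarith
  have hk : (0:ℝ) < 1 - 2 * q := by linarith
  rw [interior_tri q hq0 hq2]
  set B : Set (ℝ × ℝ) :=
    {p : ℝ × ℝ | -1 < p.1 ∧ p.1 < 0 ∧ -p.1 ^ 2 / (4 * q) - q < p.2 ∧ p.2 < -q} ∩
      {p : ℝ × ℝ | p.1 < 0 ∧ q * p.2 < (1 - q) * p.1 ∧ q * p.1 - (1 - 2 * q) < (1 - q) * p.2}
    with hB
  set L : (ℝ × ℝ) →ₗ[ℝ] (ℝ × ℝ) :=
    Matrix.toLin (Module.Basis.finTwoProd ℝ) (Module.Basis.finTwoProd ℝ) !![1 - q, q; q, 1 - q] with hL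
  have hdet : LinearMap.det L = 1 - 2 * q := by
    rw [hL, LinearMap.det_toLin, Matrix.det_fin_two_of]; ring
  have hdiv : ∀ u v : ℝ, (-u ^ 2 / (4 * q) - q < v ↔ 0 < u ^ 2 + 4 * q * v + 4 * q ^ 2) := by
    intro u v
    rw [sub_lt_iff_lt_add, div_lt_iff₀ (by positivity : (0:ℝ) < 4 * q)]
    constructor <;> intro h <;> nlinarith
  have hAB : {p : ℝ × ℝ | p.1 ∈ Ioo (1 : ℝ) 2 ∧ p.2 ∈ Ioo (-1 : ℝ) 0 ∧ nRoots q p.1 p.2 = 3} =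
      L ⁻¹' ((fun x : ℝ × ℝ => x + ((-(1 - q), -q) : ℝ × ℝ)) ⁻¹' B) := by
    ext ⟨T, S⟩
    simp only [Set.mem_setOf_eq, Set.mem_preimage, hL, Matrix.toLin_finTwoProd_apply,
      Prod.mk_add_mk, hB, Set.mem_inter_iff, Set.mem_Ioo, nRoots_iff q T S hq0,
      hdiv ((1 - q) * T + q * S + -(1 - q)) (q * T + (1 - q) * S + -q)]
    constructor
    · rintro ⟨⟨hT1, hT2⟩, ⟨hS1, hS2⟩, ha, hb, hab, hc, hD⟩
      have hu0 : (1 - q) * T + q * S + -(1 - q) < 0 := by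
        have := aux_b2c hq0 (show (T + S - 1) + (1 - T - 2 * S + q * (S - 1 - T)) +
          (S + q * (T - S)) = -q by ring) hb hab hD
        linarith
      refine ⟨⟨?_, hu0, ?_, by linarith⟩, hu0, ?_, ?_⟩
      · linarith [mul_pos h1q (by linarith : (0:ℝ) < T - 1),
          mul_lt_mul_of_pos_left hS1 hq0]
      · linarith [hD]
      · linarith [mul_pos hk (by linarith : (0:ℝ) < T - 1)]
      · linarith [mul_pos hk (by linarith : (0:ℝ) < S + 1)]
    · rintro ⟨⟨hu1, hu0, hDu, hv⟩, _, h5, h6⟩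
      have hT1 : 1 < T := by
        have key : (1 - 2 * q) * T > (1 - 2 * q) * 1 := by linarith [h5]
        exact lt_of_mul_lt_mul_left (by linarith) hk.le
      have hS1 : -1 < S := by
        have key : (1 - 2 * q) * S > (1 - 2 * q) * (-1) := by linarith [h6]
        exact lt_of_mul_lt_mul_left (by linarith) hk.le
      have hT2 : T < 2 := by
        have key : ((1 - q) * (1 - 2 * q)) * T < ((1 - q) * (1 - 2 * q)) * 2 := by
          linarith [mul_lt_mul_of_pos_left h6 hq0, mul_pos hk (neg_pos.mpr hu0),
            mul_pos hk hk]
        exact lt_of_mul_lt_mul_left key (by positivity)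
      have hS2 : S < 0 := by
        have key : (q * (1 - 2 * q)) * S < (q * (1 - 2 * q)) * 0 := by
          linarith [mul_lt_mul_of_pos_left h5 h1q, mul_pos hk (neg_pos.mpr hu0)]
        exact lt_of_mul_lt_mul_left key (by positivity)
      refine ⟨⟨hT1, hT2⟩, ⟨hS1, hS2⟩, by linarith, by linarith, by linarith, by linarith, ?_⟩
      linarith [hDu]
  rw [hAB]
  haveI : (volume : Measure (ℝ × ℝ)).IsAddHaarMeasure :=
    Measure.prod.instIsAddHaarMeasure volume volume
  rw [Measure.addHaar_preimage_linearMap volume (by rw [hdet]; exact ne_of_gt hk)]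
  rw [measure_preimage_add_right]
  rw [hdet]
  congr 1
  rw [abs_of_pos (by positivity : (0:ℝ) < (1 - 2*q)⁻¹), one_div]
end

section
/- Let 0 < q < 1/2. Then the two-dimensional Lebesgue measure of the set {(T,S) ∈ (1,2)×(−1,0) : P_{q,T,S} has exactly 3 distinct roots in [0,1]} is at most q/(2(1−q)). In particular, this measure is at most 1/2 and tends to 0 as q tends to 0. -/
open MeasureTheory Set

/-- Vieta-based key positivity: if the quadratic factor has two distinct roots in `(0,1)`,
then `1 - T + q*(T - S - 1) > 0`. -/
lemma key2 (q T S u v : ℝ) (hq0 : 0 < q)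
    (hu0 : 0 < u) (hu1 : u < 1) (hv0 : 0 < v) (hv1 : v < 1) (huv : u ≠ v)
    (hU : (T + S - 1) * u ^ 2 + (1 - T - 2 * S + q * (S - 1 - T)) * u + (S + q * (T - S)) = 0)
    (hV : (T + S - 1) * v ^ 2 + (1 - T - 2 * S + q * (S - 1 - T)) * v + (S + q * (T - S)) = 0) :
    0 < 1 - T + q * (T - S - 1) := by
  have hd : (u - v) * ((T + S - 1) * (u + v) + (1 - T - 2 * S + q * (S - 1 - T))) = 0 := by
    linear_combination hU - hV
  have huv' : u - v ≠ 0 := sub_ne_zero.2 huv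
  have hb : (1 - T - 2 * S + q * (S - 1 - T)) = -(T + S - 1) * (u + v) := by
    rcases mul_eq_zero.1 hd with h | h
    · exact absurd h huv'
    · linarith
  have hc : (S + q * (T - S)) = (T + S - 1) * u * v := by
    linear_combination hU - u * hb
  have hq : (T + S - 1) * (1 - u) * (1 - v) = -q := by
    linear_combination -hb - hc
  have ha : T + S - 1 < 0 := by
    nlinarith [mul_pos (by linarith : (0:ℝ) < 1 - u) (by linarith : (0:ℝ) < 1 - v)]
  have hgoal : 1 - T + q * (T - S - 1)
      = (-(T + S - 1)) * (u * (1 - v) + v * (1 - u)) := by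
    linear_combination hb + 2 * hc
  rw [hgoal]
  have h1 := mul_pos hu0 (by linarith : (0:ℝ) < 1 - v)
  have h2 := mul_pos hv0 (by linarith : (0:ℝ) < 1 - u)
  exact mul_pos (by linarith) (by linarith)

/-- From two distinct nonzero roots of `P` in `[0,1]` we get the positivity. -/
lemma key1 (q T S u v : ℝ) (hq0 : 0 < q)
    (hu : u ∈ Set.Icc (0:ℝ) 1) (hv : v ∈ Set.Icc (0:ℝ) 1)
    (hu0 : u ≠ 0) (hv0 : v ≠ 0) (huv : u ≠ v)
    (hPu : P q T S u = 0) (hPv : P q T S v = 0) :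
    0 < 1 - T + q * (T - S - 1) := by
  have hQ : ∀ w : ℝ, w ≠ 0 → P q T S w = 0 →
      (T + S - 1) * w ^ 2 + (1 - T - 2 * S + q * (S - 1 - T)) * w + (S + q * (T - S)) = 0 := by
    intro w hw hPw
    have h : w * ((T + S - 1) * w ^ 2 + (1 - T - 2 * S + q * (S - 1 - T)) * w
        + (S + q * (T - S))) = 0 := by
      rw [← hPw]; unfold P; ring
    rcases mul_eq_zero.1 h with h' | h'
    · exact absurd h' hw
    · exact h'
  have hQu := hQ u hu0 hPu
  have hQv := hQ v hv0 hPv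
  have hne1 : ∀ w : ℝ,
      (T + S - 1) * w ^ 2 + (1 - T - 2 * S + q * (S - 1 - T)) * w + (S + q * (T - S)) = 0 →
      w ≠ 1 := by
    intro w hw h1
    subst h1
    have : -q = 0 := by linear_combination hw
    linarith
  have hu1 : u < 1 := lt_of_le_of_ne hu.2 (hne1 u hQu)
  have hv1 : v < 1 := lt_of_le_of_ne hv.2 (hne1 v hQv)
  have hu0' : 0 < u := lt_of_le_of_ne hu.1 (Ne.symm hu0)
  have hv0' : 0 < v := lt_of_le_of_ne hv.1 (Ne.symm hv0)
  exact key2 q T S u v hq0 hu0' hu1 hv0' hv1 huv hQu hQv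

/-- If there are exactly 3 roots, the key inequality holds. -/
lemma key_s8 (q T S : ℝ) (hq0 : 0 < q) (h3 : nRoots q T S = 3) :
    0 < 1 - T + q * (T - S - 1) := by
  unfold nRoots at h3
  rw [Set.ncard_eq_three] at h3
  obtain ⟨x, y, z, hxy, hxz, hyz, hR⟩ := h3
  have h0 : (0:ℝ) ∈ {x : ℝ | x ∈ Set.Icc (0 : ℝ) 1 ∧ P q T S x = 0} := by
    refine ⟨⟨le_refl _, zero_le_one⟩, ?_⟩
    unfold P; ring
  have hx : x ∈ Set.Icc (0:ℝ) 1 ∧ P q T S x = 0 := by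
    have : x ∈ {x : ℝ | x ∈ Set.Icc (0 : ℝ) 1 ∧ P q T S x = 0} := by
      rw [hR]; simp
    exact this
  have hy : y ∈ Set.Icc (0:ℝ) 1 ∧ P q T S y = 0 := by
    have : y ∈ {x : ℝ | x ∈ Set.Icc (0 : ℝ) 1 ∧ P q T S x = 0} := by
      rw [hR]; simp
    exact this
  have hz : z ∈ Set.Icc (0:ℝ) 1 ∧ P q T S z = 0 := by
    have : z ∈ {x : ℝ | x ∈ Set.Icc (0 : ℝ) 1 ∧ P q T S x = 0} := by
      rw [hR]; simp
    exact this
  rw [hR] at h0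
  simp only [Set.mem_insert_iff, Set.mem_singleton_iff] at h0
  rcases h0 with h0 | h0 | h0
  · exact key1 q T S y z hq0 hy.1 hz.1 (by rw [← h0] at hxy; exact hxy.symm)
      (by rw [← h0] at hxz; exact hxz.symm) hyz hy.2 hz.2
  · exact key1 q T S x z hq0 hx.1 hz.1 (by rw [← h0] at hxy; exact hxy)
      (by rw [← h0] at hyz; exact hyz.symm) hxz hx.2 hz.2
  · exact key1 q T S x y hq0 hx.1 hy.1 (by rw [← h0] at hxz; exact hxz)
      (by rw [← h0] at hyz; exact hyz) hxy hx.2 hy.2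

lemma volume_bound (q : ℝ) (hq0 : 0 < q) (hq2 : q < 1 / 2) :
    volume {p : ℝ × ℝ | p.1 ∈ Ioo (1 : ℝ) 2 ∧ p.2 ∈ Ioo (-1 : ℝ) 0 ∧ nRoots q p.1 p.2 = 3} ≤
      ENNReal.ofReal (q / (2 * (1 - q))) := by
  have h1q : (0:ℝ) < 1 - q := by linarith
  set k : ℝ := q / (1 - q) with hk
  have hk0 : 0 ≤ k := div_nonneg hq0.le h1q.le
  set B : Set (ℝ × ℝ) :=
    regionBetween (fun _ => (1:ℝ)) (fun s => 1 + k * (-s)) (Ioo (-1:ℝ) 0) with hB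
  have hsub : {p : ℝ × ℝ | p.1 ∈ Ioo (1 : ℝ) 2 ∧ p.2 ∈ Ioo (-1 : ℝ) 0 ∧ nRoots q p.1 p.2 = 3}
      ⊆ Prod.swap ⁻¹' B := by
    rintro ⟨T, S⟩ ⟨hT, hS, h3⟩
    have hkey := key_s8 q T S hq0 h3
    refine ⟨hS, hT.1, ?_⟩
    show T < 1 + k * (-S)
    have h2 : T - 1 < q * -S / (1 - q) := by
      rw [lt_div_iff₀ h1q]; nlinarith
    have h3 : k * (-S) = q * -S / (1 - q) := by rw [hk]; ring
    linarith [h3 ▸ h2]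
  have hBmeas : MeasurableSet B :=
    measurableSet_regionBetween measurable_const
      (by fun_prop) measurableSet_Ioo
  have hswap : volume (Prod.swap ⁻¹' B) = volume B := by
    rw [Measure.volume_eq_prod]
    exact Measure.measurePreserving_swap.measure_preimage hBmeas.nullMeasurableSet
  have hfint : IntegrableOn (fun _ : ℝ => (1:ℝ)) (Ioo (-1:ℝ) 0) volume := by
    apply Integrable.mono_measure ?_ (Measure.restrict_mono Ioo_subset_Icc_self le_rfl)
    exact (Continuous.integrableOn_Icc (by fun_prop))
  have hgint : IntegrableOn (fun s : ℝ => 1 + k * (-s)) (Ioo (-1:ℝ) 0) volume := by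
    apply Integrable.mono_measure ?_ (Measure.restrict_mono Ioo_subset_Icc_self le_rfl)
    exact (Continuous.integrableOn_Icc (by fun_prop))
  have hvol : volume B = ENNReal.ofReal (∫ s in Ioo (-1:ℝ) 0, k * (-s)) := by
    rw [hB, Measure.volume_eq_prod]
    rw [volume_regionBetween_eq_integral hfint hgint measurableSet_Ioo
      (fun s hs => by
        have h : 0 ≤ k * (-s) := mul_nonneg hk0 (by linarith [hs.2])
        show (1:ℝ) ≤ 1 + k * (-s)
        linarith)]
    congr 1
    have heq : ((fun s : ℝ => 1 + k * (-s)) - (fun _ : ℝ => (1:ℝ))) = fun s => k * (-s) := by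
      funext s
      simp only [Pi.sub_apply]
      ring
    rw [heq]
  have hint : (∫ s in Ioo (-1:ℝ) 0, k * (-s)) = q / (2 * (1 - q)) := by
    rw [← integral_Ioc_eq_integral_Ioo,
      ← intervalIntegral.integral_of_le (by norm_num : (-1:ℝ) ≤ 0)]
    rw [intervalIntegral.integral_const_mul]
    rw [intervalIntegral.integral_neg, integral_id]
    rw [hk, div_mul_eq_mul_div, eq_div_iff (by positivity : (2 * (1 - q)) ≠ 0)]
    field_simp
    norm_num
  calc volume {p : ℝ × ℝ | p.1 ∈ Ioo (1 : ℝ) 2 ∧ p.2 ∈ Ioo (-1 : ℝ) 0 ∧ nRoots q p.1 p.2 = 3}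
      ≤ volume (Prod.swap ⁻¹' B) := measure_mono hsub
    _ = volume B := hswap
    _ = ENNReal.ofReal (q / (2 * (1 - q))) := by rw [hvol, hint]

theorem PD_three_equilibria_bound :
    (∀ q : ℝ, 0 < q → q < 1 / 2 →
      volume {p : ℝ × ℝ | p.1 ∈ Ioo (1 : ℝ) 2 ∧ p.2 ∈ Ioo (-1 : ℝ) 0 ∧ nRoots q p.1 p.2 = 3} ≤
          ENNReal.ofReal (q / (2 * (1 - q))) ∧
      volume {p : ℝ × ℝ | p.1 ∈ Ioo (1 : ℝ) 2 ∧ p.2 ∈ Ioo (-1 : ℝ) 0 ∧ nRoots q p.1 p.2 = 3} ≤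
          ENNReal.ofReal (1 / 2)) ∧
    Filter.Tendsto
      (fun q : ℝ =>
        volume {p : ℝ × ℝ | p.1 ∈ Ioo (1 : ℝ) 2 ∧ p.2 ∈ Ioo (-1 : ℝ) 0 ∧ nRoots q p.1 p.2 = 3})
      (nhdsWithin 0 (Ioo (0 : ℝ) (1 / 2))) (nhds 0) := by
  constructor
  · intro q hq0 hq2
    refine ⟨volume_bound q hq0 hq2, ?_⟩
    refine le_trans (volume_bound q hq0 hq2) (ENNReal.ofReal_le_ofReal ?_)
    rw [div_le_div_iff₀ (by linarith) (by norm_num)]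
    linarith
  · have hupper : Filter.Tendsto (fun q : ℝ => ENNReal.ofReal (q / (2 * (1 - q))))
        (nhdsWithin 0 (Ioo (0 : ℝ) (1 / 2))) (nhds 0) := by
      have hreal : Filter.Tendsto (fun q : ℝ => q / (2 * (1 - q)))
          (nhdsWithin 0 (Ioo (0 : ℝ) (1 / 2))) (nhds 0) := by
        have hc : ContinuousAt (fun q : ℝ => q / (2 * (1 - q))) 0 := by
          apply ContinuousAt.div (by fun_prop) (by fun_prop)
          norm_num
        have h0 : (fun q : ℝ => q / (2 * (1 - q))) 0 = 0 := by norm_num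
        have : Filter.Tendsto (fun q : ℝ => q / (2 * (1 - q)))
            (nhdsWithin 0 (Ioo (0 : ℝ) (1 / 2))) (nhds ((fun q : ℝ => q / (2 * (1 - q))) 0)) :=
          hc.tendsto.mono_left nhdsWithin_le_nhds
        rwa [h0] at this
      have := (ENNReal.continuous_ofReal.tendsto 0).comp hreal
      simpa [Function.comp_def] using this
    refine tendsto_of_tendsto_of_tendsto_of_le_of_le' tendsto_const_nhds hupper
      (Filter.Eventually.of_forall fun q => zero_le) ?_
    filter_upwards [eventually_mem_nhdsWithin] with q hq
    exact volume_bound q hq.1 hq.2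
end

section
/- Let 0 < q < 1/2 and let L_q : ℝ² → ℝ² be the linear map L_q(t,s) = ((1−q)t + qs, qt + (1−q)s). Then the intersection of the image of the open rectangle (0,1) × (−1,0) under L_q with the open square (−1,0) × (−1,0) equals the interior of the triangle with vertices M = (−q,−(1−q)), N = (0,−(1−2q)/(1−q)), O = (0,0). -/
open Set

theorem image_rectangle_inter_square_eq_triangle (q : ℝ) (hq0 : 0 < q) (hq2 : q < 1 / 2) :
    (fun p : ℝ × ℝ => ((1 - q) * p.1 + q * p.2, q * p.1 + (1 - q) * p.2)) ''
          (Ioo (0 : ℝ) 1 ×ˢ Ioo (-1 : ℝ) 0) ∩ (Ioo (-1 : ℝ) 0 ×ˢ Ioo (-1 : ℝ) 0) =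
      interior (convexHull ℝ
        {((-q : ℝ), -(1 - q)), ((0 : ℝ), -(1 - 2 * q) / (1 - q)), ((0 : ℝ), (0 : ℝ))}) := by
  have h2q : (0:ℝ) < 1 - 2 * q := by linarith
  have hq1 : (0:ℝ) < 1 - q := by linarith
  set T : Set (ℝ × ℝ) := {p | p.1 ≤ 0 ∧ 0 ≤ (1 - q) * p.1 - q * p.2 ∧
      -(1 - 2 * q) ≤ (1 - q) * p.2 - q * p.1} with hTdef
  set U : Set (ℝ × ℝ) := {p | p.1 < 0 ∧ 0 < (1 - q) * p.1 - q * p.2 ∧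
      -(1 - 2 * q) < (1 - q) * p.2 - q * p.1} with hUdef
  have hUT : U ⊆ T := fun p hp => ⟨hp.1.le, hp.2.1.le, hp.2.2.le⟩
  have hUopen : IsOpen U := by
    have h1 : IsOpen {p : ℝ × ℝ | p.1 < 0} := isOpen_lt continuous_fst continuous_const
    have h2 : IsOpen {p : ℝ × ℝ | 0 < (1 - q) * p.1 - q * p.2} :=
      isOpen_lt continuous_const (by fun_prop)
    have h3 : IsOpen {p : ℝ × ℝ | -(1 - 2 * q) < (1 - q) * p.2 - q * p.1} :=
      isOpen_lt continuous_const (by fun_prop)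
    exact h1.inter (h2.inter h3)
  -- convexity of T
  have hTconv : Convex ℝ T := by
    intro x hx y hy a b ha hb hab
    obtain ⟨hx1, hx2, hx3⟩ := hx
    obtain ⟨hy1, hy2, hy3⟩ := hy
    refine ⟨?_, ?_, ?_⟩ <;>
      simp only [Prod.fst_add, Prod.snd_add, Prod.smul_fst, Prod.smul_snd, smul_eq_mul]
    · nlinarith [mul_le_mul_of_nonneg_left hx1 ha, mul_le_mul_of_nonneg_left hy1 hb]
    · nlinarith [mul_le_mul_of_nonneg_left hx2 ha, mul_le_mul_of_nonneg_left hy2 hb]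
    · nlinarith [mul_le_mul_of_nonneg_left hx3 ha, mul_le_mul_of_nonneg_left hy3 hb]
  -- convexHull = T
  have hhull : convexHull ℝ
      ({((-q : ℝ), -(1 - q)), ((0 : ℝ), -(1 - 2 * q) / (1 - q)), ((0 : ℝ), (0 : ℝ))} :
        Set (ℝ × ℝ)) = T := by
    apply Subset.antisymm
    · apply convexHull_min _ hTconv
      intro p hp
      simp only [Set.mem_insert_iff, Set.mem_singleton_iff] at hp
      have hN : (1 - q) * (-(1 - 2 * q) / (1 - q)) = -(1 - 2 * q) := by
        field_simp
      have hN2 : (0:ℝ) ≤ (1 - q) * 0 - q * (-(1 - 2 * q) / (1 - q)) := by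
        have : (0:ℝ) ≤ (1 - 2 * q) / (1 - q) := div_nonneg h2q.le hq1.le
        nlinarith [mul_nonneg hq0.le this]
      rcases hp with rfl | rfl | rfl
      · exact ⟨show (-q : ℝ) ≤ 0 by linarith,
          show (0:ℝ) ≤ (1 - q) * (-q) - q * (-(1 - q)) by nlinarith,
          show -(1 - 2 * q) ≤ (1 - q) * (-(1 - q)) - q * (-q) by nlinarith⟩
      · exact ⟨le_refl 0, hN2,
          show -(1 - 2 * q) ≤ (1 - q) * (-(1 - 2 * q) / (1 - q)) - q * 0 by linarith [hN]⟩
      · exact ⟨le_refl 0, show (0:ℝ) ≤ (1 - q) * 0 - q * 0 by norm_num,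
          show -(1 - 2 * q) ≤ (1 - q) * 0 - q * 0 by norm_num; linarith⟩
    · rintro ⟨x, y⟩ ⟨h1, h2, h3⟩
      have h1' : x ≤ 0 := h1
      have h2' : (0:ℝ) ≤ (1 - q) * x - q * y := h2
      have h3' : -(1 - 2 * q) ≤ (1 - q) * y - q * x := h3
      have hqne : q ≠ 0 := ne_of_gt hq0
      have h2qne : (1 - 2 * q) ≠ 0 := ne_of_gt h2q
      have hq1ne : (1 - q) ≠ 0 := ne_of_gt hq1
      set w : Fin 3 → ℝ := ![-x / q, (1 - q) * ((1 - q) * x - q * y) / (q * (1 - 2 * q)),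
        ((1 - 2 * q) + (1 - q) * y - q * x) / (1 - 2 * q)] with hw
      set z : Fin 3 → ℝ × ℝ := ![((-q : ℝ), -(1 - q)), ((0 : ℝ), -(1 - 2 * q) / (1 - q)),
        ((0 : ℝ), (0 : ℝ))] with hz
      have hsum : ∑ i, w i = 1 := by
        simp only [hw, Fin.sum_univ_three, Matrix.cons_val_zero, Matrix.cons_val_one,
          Matrix.head_cons, Matrix.cons_val_two, Matrix.tail_cons]
        field_simp [show (1:ℝ) - q * 2 ≠ 0 from ne_of_gt (by linarith)]
        ring
      have hmem := (convex_convexHull ℝ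
        ({((-q : ℝ), -(1 - q)), ((0 : ℝ), -(1 - 2 * q) / (1 - q)), ((0 : ℝ), (0 : ℝ))} :
          Set (ℝ × ℝ))).sum_mem (t := Finset.univ) (w := w) (z := z)
        (fun i _ => by
          fin_cases i
          · show (0:ℝ) ≤ -x / q
            exact div_nonneg (by linarith) hq0.le
          · show (0:ℝ) ≤ (1 - q) * ((1 - q) * x - q * y) / (q * (1 - 2 * q))
            exact div_nonneg (mul_nonneg hq1.le h2') (mul_nonneg hq0.le h2q.le)
          · show (0:ℝ) ≤ (1 - 2 * q + (1 - q) * y - q * x) / (1 - 2 * q)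
            exact div_nonneg (by linarith) h2q.le)
        hsum
        (fun i _ => by
          apply subset_convexHull ℝ
          fin_cases i <;> simp [hz])
      convert hmem using 1
      simp only [hw, hz, Fin.sum_univ_three, Matrix.cons_val_zero, Matrix.cons_val_one,
        Matrix.head_cons, Matrix.cons_val_two, Matrix.tail_cons, Prod.smul_mk, smul_eq_mul,
        Prod.mk_add_mk, Prod.mk.injEq]
      constructor <;> (field_simp [show (1:ℝ) - q * 2 ≠ 0 from ne_of_gt (by linarith)]; try ring)
  -- interior T = U
  have hint : interior T = U := by
    apply Subset.antisymm
    · intro p hp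
      rw [mem_interior_iff_mem_nhds, Metric.mem_nhds_iff] at hp
      obtain ⟨ε, hε, hball⟩ := hp
      have key : ∀ a b : ℝ, |a| < ε → |b| < ε → ((p.1 + a, p.2 + b) : ℝ × ℝ) ∈ T := by
        intro a b ha hb
        apply hball
        rw [Metric.mem_ball, Prod.dist_eq]
        have d1 : dist (p.1 + a) p.1 = |a| := by simp [Real.dist_eq]
        have d2 : dist (p.2 + b) p.2 = |b| := by simp [Real.dist_eq]
        rw [d1, d2]
        exact max_lt ha hb
      have hε2 : |(ε / 2 : ℝ)| < ε := by rw [abs_lt]; constructor <;> linarith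
      have hεq : |(-(ε / 2) * (1 - q) : ℝ)| < ε := by
        rw [abs_lt]; constructor <;> nlinarith
      have hεq2 : |((ε / 2) * q : ℝ)| < ε := by
        rw [abs_lt]; constructor <;> nlinarith
      have k1 := key (ε / 2) 0 hε2 (by simpa using hε)
      have k2 := key (-(ε / 2) * (1 - q)) ((ε / 2) * q) hεq hεq2
      have k3 := key ((ε / 2) * q) (-(ε / 2) * (1 - q)) hεq2 hεq
      obtain ⟨k1a, -, -⟩ := k1
      obtain ⟨-, k2b, -⟩ := k2
      obtain ⟨-, -, k3c⟩ := k3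
      simp only [hUdef, mem_setOf_eq]
      refine ⟨?_, ?_, ?_⟩
      · simp only at k1a; linarith
      · simp only at k2b; nlinarith [sq_nonneg (1 - q), sq_nonneg q]
      · simp only at k3c; nlinarith [sq_nonneg (1 - q), sq_nonneg q]
    · exact interior_maximal hUT hUopen
  -- LHS = U
  have himg : (fun p : ℝ × ℝ => ((1 - q) * p.1 + q * p.2, q * p.1 + (1 - q) * p.2)) ''
      (Ioo (0 : ℝ) 1 ×ˢ Ioo (-1 : ℝ) 0) ∩ (Ioo (-1 : ℝ) 0 ×ˢ Ioo (-1 : ℝ) 0) = U := by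
    ext ⟨x, y⟩
    simp only [mem_inter_iff, mem_image, mem_prod, mem_Ioo, hUdef, mem_setOf_eq, Prod.ext_iff,
      Prod.exists]
    constructor
    · rintro ⟨⟨t, s, ⟨⟨ht0, ht1⟩, hs0, hs1⟩, hx, hy⟩, ⟨hx0, hx1⟩, hy0, hy1⟩
      subst hx hy
      refine ⟨hx1, by nlinarith, by nlinarith⟩
    · rintro ⟨hx0, h2, h3⟩
      have hxq : -q < x := by nlinarith [mul_pos hq1 h2, mul_pos hq0 (show (0:ℝ) <
        (1 - q) * y - q * x + (1 - 2 * q) by linarith)]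
      have hy0 : y < 0 := by nlinarith
      have hy1 : -1 < y := by nlinarith
      have hf1 : (1 - q) * x - q * y < 1 - 2 * q := by
        nlinarith [mul_pos hq0 (show (0:ℝ) < (1 - q) * y - q * x + (1 - 2 * q) by linarith)]
      have hg0 : (1 - q) * y - q * x < 0 := by
        nlinarith [mul_pos hq1 h2]
      refine ⟨⟨((1 - q) * x - q * y) / (1 - 2 * q), ((1 - q) * y - q * x) / (1 - 2 * q),
        ⟨⟨div_pos h2 h2q, ?_⟩, ?_, ?_⟩, ?_, ?_⟩, ⟨by linarith, hx0⟩, hy1, hy0⟩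
      · rw [div_lt_one h2q]; linarith
      · rw [lt_div_iff₀ h2q]; linarith
      · exact div_neg_of_neg_of_pos hg0 h2q
      · field_simp [show (1:ℝ) - q * 2 ≠ 0 from ne_of_gt (by linarith)]; ring
      · field_simp [show (1:ℝ) - q * 2 ≠ 0 from ne_of_gt (by linarith)]; ring
  rw [himg, hhull, hint]
end

section
/- Let 0 < q < 1/2 and let T, S ∈ ℝ. Define a = T + S − 1, b = 1 − T − 2S + q(S − 1 − T), c = S + q(T − S), and h(x) = ax² + bx + c. Then h has exactly two distinct roots in the open interval (0,1) if and only if the following three conditions hold: (q + a − c)² + 4qc > 0, q + a − c < 0, and c < 0. -/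
open Set

set_option maxHeartbeats 1600000 in
theorem quadratic_two_roots_iff (q T S : ℝ) (hq0 : 0 < q) (hq2 : q < 1 / 2) :
    ({x : ℝ | x ∈ Ioo (0 : ℝ) 1 ∧
        (T + S - 1) * x ^ 2 + (1 - T - 2 * S + q * (S - 1 - T)) * x + (S + q * (T - S)) = 0}.ncard
      = 2) ↔
      ((q + (T + S - 1) - (S + q * (T - S))) ^ 2 + 4 * q * (S + q * (T - S)) > 0 ∧
        q + (T + S - 1) - (S + q * (T - S)) < 0 ∧ S + q * (T - S) < 0) := by
  set a := T + S - 1 with ha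
  set b := 1 - T - 2 * S + q * (S - 1 - T) with hb
  set c := S + q * (T - S) with hc
  have habc : a + b + c = -q := by rw [ha, hb, hc]; ring
  have h1 : (q + a - c) ^ 2 + 4 * q * c = b ^ 2 - 4 * a * c := by
    linear_combination (q + a + c - b) * habc
  constructor
  · intro h2
    rw [Set.ncard_eq_two] at h2
    obtain ⟨x, y, hxy, hset⟩ := h2
    have hx : x ∈ Ioo (0:ℝ) 1 ∧ a * x ^ 2 + b * x + c = 0 := by
      have : x ∈ ({x, y} : Set ℝ) := by simp
      rw [← hset] at this; exact this
    have hy : y ∈ Ioo (0:ℝ) 1 ∧ a * y ^ 2 + b * y + c = 0 := by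
      have : y ∈ ({x, y} : Set ℝ) := by simp
      rw [← hset] at this; exact this
    obtain ⟨⟨hx0, hx1⟩, ex⟩ := hx
    obtain ⟨⟨hy0, hy1⟩, ey⟩ := hy
    have hxy' : x - y ≠ 0 := sub_ne_zero.mpr hxy
    have key : (x - y) * (a * (x + y) + b) = 0 := by linear_combination ex - ey
    have hab : a * (x + y) + b = 0 := by
      rcases mul_eq_zero.mp key with h | h
      · exact absurd h hxy'
      · exact h
    have hc' : c = a * x * y := by linear_combination ex - x * hab
    have haq : a * (1 - x) * (1 - y) = -q := by linear_combination habc - hab - hc'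
    have ha0 : a < 0 := by nlinarith [mul_pos (by linarith : (0:ℝ) < 1 - x) (by linarith : (0:ℝ) < 1 - y)]
    have hcneg : c < 0 := by
      rw [hc']
      have : 0 < x * y := mul_pos hx0 hy0
      nlinarith
    refine ⟨?_, ?_, hcneg⟩
    · have hd : (q + a - c) ^ 2 + 4 * q * c = a ^ 2 * (x - y) ^ 2 := by
        rw [h1]; linear_combination (b - a * (x + y)) * hab - 4 * a * hc'
      rw [hd]
      have hne0 : a * (x - y) ≠ 0 := mul_ne_zero (by linarith) hxy'
      have := mul_self_pos.mpr hne0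
      nlinarith
    · have hid : q + a - c = a * (x * (1 - y) + y * (1 - x)) := by
        linear_combination haq - hc'
      rw [hid]
      have h1' : 0 < x * (1 - y) + y * (1 - x) := by nlinarith
      nlinarith
  · rintro ⟨hD, hβ, hcneg⟩
    have ha0 : a < 0 := by linarith
    have hDb : 0 < b ^ 2 - 4 * a * c := by rw [← h1]; exact hD
    set s := Real.sqrt (b ^ 2 - 4 * a * c) with hs
    have hs2 : s ^ 2 = b ^ 2 - 4 * a * c := Real.sq_sqrt hDb.le
    have hs0 : 0 < s := Real.sqrt_pos.mpr hDb
    have hb2c : 0 < b + 2 * c := by linarith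
    have hbpos : 0 < b := by linarith
    have hsb : s < b := by nlinarith [mul_pos (neg_pos.mpr ha0) (neg_pos.mpr hcneg)]
    have h2ab : b + 2 * a < 0 := by linarith
    have hsq : s ^ 2 = (b + 2 * a) ^ 2 + 4 * a * q := by
      linear_combination hs2 - 4 * a * habc
    have h4aq : 4 * a * q < 0 := by nlinarith
    have hlt : s ^ 2 < (-(b + 2 * a)) ^ 2 := by rw [neg_sq]; linarith
    have hs2ab : s < -(b + 2 * a) :=
      lt_of_pow_lt_pow_left₀ 2 (by linarith) hlt
    have h2a : 2 * a < 0 := by linarith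
    have h2a' : (2 * a) ≠ 0 := by linarith
    set x1 := (-b + s) / (2 * a) with hx1
    set x2 := (-b - s) / (2 * a) with hx2
    have hx1mem : x1 ∈ Ioo (0:ℝ) 1 := by
      constructor
      · rw [hx1, div_pos_iff]
        right; constructor <;> linarith
      · rw [hx1, div_lt_iff_of_neg h2a]
        linarith
    have hx2mem : x2 ∈ Ioo (0:ℝ) 1 := by
      constructor
      · rw [hx2, div_pos_iff]
        right; constructor <;> linarith
      · rw [hx2, div_lt_iff_of_neg h2a]
        linarith
    have hne : x1 ≠ x2 := by
      rw [hx1, hx2]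
      intro h
      rw [div_eq_div_iff h2a' h2a'] at h
      nlinarith
    have hsumm : a * (x1 + x2) = -b := by
      rw [hx1, hx2, ← add_div, mul_div_assoc', div_eq_iff h2a']; ring
    have hprod : a * (x1 * x2) = c := by
      rw [hx1, hx2, div_mul_div_comm, mul_div_assoc', div_eq_iff (mul_ne_zero h2a' h2a')]
      linear_combination (-a) * hs2
    have hfact : ∀ z : ℝ, a * z ^ 2 + b * z + c = a * (z - x1) * (z - x2) := by
      intro z
      linear_combination z * hsumm - hprod
    have hroot1 : a * x1 ^ 2 + b * x1 + c = 0 := by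
      rw [hfact x1]; ring
    have hroot2 : a * x2 ^ 2 + b * x2 + c = 0 := by
      rw [hfact x2]; ring
    have hseteq : {x : ℝ | x ∈ Ioo (0 : ℝ) 1 ∧ a * x ^ 2 + b * x + c = 0} = {x1, x2} := by
      ext z
      simp only [Set.mem_setOf_eq, Set.mem_insert_iff, Set.mem_singleton_iff]
      constructor
      · rintro ⟨-, hz⟩
        rw [hfact z] at hz
        rcases mul_eq_zero.mp hz with h | h
        · rcases mul_eq_zero.mp h with h | h
          · exact absurd h (by linarith)
          · left; linarith [sub_eq_zero.mp h]
        · right; linarith [sub_eq_zero.mp h]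
      · rintro (rfl | rfl)
        · exact ⟨hx1mem, hroot1⟩
        · exact ⟨hx2mem, hroot2⟩
    rw [hseteq]
    exact Set.ncard_pair hne
end

section
/- Let 0 < q < 1/2. Then the equation −x²/(4q) − q = (qx − (1−2q))/(1−q) has exactly two real solutions, x₁ = −2q²/(1−q) − 2√q(1−2q)/(1−q) and x₂ = −2q²/(1−q) + 2√q(1−2q)/(1−q) with x₁ < x₂; moreover, −1 < x₁ < −q for all q ∈ (0,1/2), and x₂ < −q if and only if q > 4/9. -/
open Set

theorem parabola_line_intersection_G (q : ℝ) (hq0 : 0 < q) (hq2 : q < 1 / 2) :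
    {x : ℝ | -x ^ 2 / (4 * q) - q = (q * x - (1 - 2 * q)) / (1 - q)} =
        {-2 * q ^ 2 / (1 - q) - 2 * Real.sqrt q * (1 - 2 * q) / (1 - q),
          -2 * q ^ 2 / (1 - q) + 2 * Real.sqrt q * (1 - 2 * q) / (1 - q)} ∧
      -2 * q ^ 2 / (1 - q) - 2 * Real.sqrt q * (1 - 2 * q) / (1 - q) <
        -2 * q ^ 2 / (1 - q) + 2 * Real.sqrt q * (1 - 2 * q) / (1 - q) ∧
      (-1 < -2 * q ^ 2 / (1 - q) - 2 * Real.sqrt q * (1 - 2 * q) / (1 - q) ∧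
        -2 * q ^ 2 / (1 - q) - 2 * Real.sqrt q * (1 - 2 * q) / (1 - q) < -q) ∧
      (-2 * q ^ 2 / (1 - q) + 2 * Real.sqrt q * (1 - 2 * q) / (1 - q) < -q ↔ 4 / 9 < q) := by
  have hq1 : q < 1 := by linarith
  have h1q : (0:ℝ) < 1 - q := by linarith
  have h1qne : (1:ℝ) - q ≠ 0 := ne_of_gt h1q
  have hqne : q ≠ 0 := ne_of_gt hq0
  set s := Real.sqrt q with hsdef
  have hs : s ^ 2 = q := Real.sq_sqrt hq0.le
  have hs0 : 0 < s := Real.sqrt_pos.mpr hq0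
  have hs1 : s < 1 := by nlinarith
  have ha : -2 * q ^ 2 / (1 - q) - 2 * s * (1 - 2 * q) / (1 - q)
      = (-2 * q ^ 2 - 2 * s * (1 - 2 * q)) / (1 - q) := by ring
  have hb : -2 * q ^ 2 / (1 - q) + 2 * s * (1 - 2 * q) / (1 - q)
      = (-2 * q ^ 2 + 2 * s * (1 - 2 * q)) / (1 - q) := by ring
  refine ⟨?_, ?_, ⟨?_, ?_⟩, ?_⟩
  · ext x
    simp only [mem_setOf_eq, mem_insert_iff, mem_singleton_iff, ha, hb,
      eq_div_iff h1qne]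
    constructor
    · intro h
      have h2 : ((1-q)*x + 2*q^2 + 2*s*(1-2*q)) * ((1-q)*x + 2*q^2 - 2*s*(1-2*q)) = 0 := by
        field_simp at h
        nlinarith [h, hs]
      rcases mul_eq_zero.mp h2 with h3 | h3
      · left; linarith
      · right; linarith
    · rintro (h | h) <;> field_simp
      · have h3 : ((-x ^ 2 - 4 * q * q) * (1 - q) - (q * x - (1 - 2 * q)) * (4 * q)) * (1 - q) = 0 := by
          linear_combination (-((1-q)*x + 2*q^2 - 2*s*(1-2*q))) * h - 4*(1-2*q)^2 * hs
        have h4 := mul_eq_zero.mp h3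
        rcases h4 with h4 | h4
        · linarith
        · exact absurd h4 h1qne
      · have h3 : ((-x ^ 2 - 4 * q * q) * (1 - q) - (q * x - (1 - 2 * q)) * (4 * q)) * (1 - q) = 0 := by
          linear_combination (-((1-q)*x + 2*q^2 + 2*s*(1-2*q))) * h - 4*(1-2*q)^2 * hs
        have h4 := mul_eq_zero.mp h3
        rcases h4 with h4 | h4
        · linarith
        · exact absurd h4 h1qne
  · rw [ha, hb, div_lt_div_iff₀ h1q h1q]
    nlinarith [mul_pos hs0 h1q]
  · rw [ha, lt_div_iff₀ h1q]
    nlinarith [sq_nonneg (1 - s), mul_pos hs0 hs0]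
  · rw [ha, div_lt_iff₀ h1q]
    nlinarith [mul_nonneg (sq_nonneg (1 - s)) (by linarith : (0:ℝ) ≤ 3*s + 2)]
  · rw [hb, div_lt_iff₀ h1q]
    constructor
    · intro h
      nlinarith [sq_nonneg (s + 1), mul_pos hs0 hs0, sq_nonneg (3*s - 2)]
    · intro h
      have hs23 : 2/3 < s := by nlinarith
      have hs23 : 2/3 < s := by nlinarith
      have hp : 0 < (3*s - 2) * (s + 1)^2 :=
        mul_pos (by linarith) (by positivity)
      nlinarith [hp]
end

section
/- Let 0 < q < 1/2. Then the two-dimensional Lebesgue measure of the set {(x,y) ∈ ℝ² : (qx − (1−2q))/(1−q) < y < −x²/(4q) − q} equals 8√q(1−2q)³/(3(1−q)³). -/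
open MeasureTheory Set

theorem volume_lens (q : ℝ) (hq0 : 0 < q) (hq2 : q < 1 / 2) :
    volume {p : ℝ × ℝ | (q * p.1 - (1 - 2 * q)) / (1 - q) < p.2 ∧ p.2 < -p.1 ^ 2 / (4 * q) - q} =
      ENNReal.ofReal (8 * Real.sqrt q * (1 - 2 * q) ^ 3 / (3 * (1 - q) ^ 3)) := by
  have hr2 : Real.sqrt q ^ 2 = q := Real.sq_sqrt hq0.le
  set r := Real.sqrt q with hrdef
  have hrpos : 0 < r := Real.sqrt_pos.mpr hq0
  have h1q : 0 < 1 - q := by linarith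
  have h12q : 0 < 1 - 2*q := by linarith
  have h4q : (4:ℝ) * q ≠ 0 := by positivity
  set f : ℝ → ℝ := fun x => (q * x - (1 - 2 * q)) / (1 - q) with hf
  set g : ℝ → ℝ := fun x => -x ^ 2 / (4 * q) - q with hg
  set a : ℝ := (-2*q^2 - 2*r*(1-2*q))/(1-q) with ha
  set b : ℝ := (-2*q^2 + 2*r*(1-2*q))/(1-q) with hb
  have hab : a < b := by
    rw [ha, hb, div_lt_div_iff_of_pos_right h1q]
    nlinarith
  have hq' : q = r ^ 2 := hr2.symm
  have h1r : (1:ℝ) - r ^ 2 ≠ 0 := by rw [hr2]; positivity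
  have hr0 : r ≠ 0 := ne_of_gt hrpos
  have key : ∀ x : ℝ, g x - f x = (b - x) * (x - a) / (4 * q) := by
    intro x
    rw [hf, hg, ha, hb, hq']
    field_simp
    ring
  have hseq : {p : ℝ × ℝ | (q * p.1 - (1 - 2 * q)) / (1 - q) < p.2 ∧ p.2 < -p.1 ^ 2 / (4 * q) - q}
      = regionBetween f g (Ioo a b) := by
    ext p
    simp only [regionBetween, mem_setOf_eq, mem_Ioo, hf, hg]
    constructor
    · rintro ⟨h1, h2⟩
      have hfg : f p.1 < g p.1 := lt_trans h1 h2
      have hpos : 0 < (b - p.1) * (p.1 - a) := by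
        by_contra h
        push_neg at h
        have h2 : (b - p.1) * (p.1 - a) / (4 * q) ≤ 0 :=
          div_nonpos_iff.mpr (Or.inr ⟨h, by positivity⟩)
        have h3 := key p.1
        simp only [hf, hg] at h3 hfg
        linarith
      rcases mul_pos_iff.mp hpos with ⟨h3, h4⟩ | ⟨h3, h4⟩
      · exact ⟨⟨by linarith, by linarith⟩, h1, h2⟩
      · exfalso; linarith
    · rintro ⟨_, h1, h2⟩; exact ⟨h1, h2⟩
  have hfc : Continuous f := by rw [hf]; fun_prop
  have hgc : Continuous g := by
    rw [hg]; apply Continuous.sub ?_ continuous_const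
    exact (continuous_pow 2).neg.div_const _
  have hfint : IntegrableOn f (Ioo a b) :=
    (hfc.continuousOn.integrableOn_compact isCompact_Icc).mono_set Ioo_subset_Icc_self
  have hgint : IntegrableOn g (Ioo a b) :=
    (hgc.continuousOn.integrableOn_compact isCompact_Icc).mono_set Ioo_subset_Icc_self
  have hfg : ∀ x ∈ Ioo a b, f x ≤ g x := by
    intro x hx
    have h0 := key x
    have h1 : 0 ≤ (b - x) * (x - a) / (4 * q) := by
      apply div_nonneg _ (by positivity)
      nlinarith [hx.1, hx.2]
    rw [← sub_nonneg, h0]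
    exact h1
  rw [hseq, Measure.volume_eq_prod, volume_regionBetween_eq_integral hfint hgint measurableSet_Ioo hfg]
  congr 1
  have : ∫ y in Ioo a b, (g - f) y = ∫ y in a..b, (g y - f y) := by
    rw [intervalIntegral.integral_of_le hab.le, MeasureTheory.integral_Ioc_eq_integral_Ioo]
    rfl
  rw [this, intervalIntegral.integral_congr (g := fun x => (b - x) * (x - a) / (4 * q))
    (fun x _ => key x)]
  have expand : ∀ x : ℝ, (b - x) * (x - a) / (4 * q)
      = (-(1/(4*q))) * x^2 + ((a+b)/(4*q)) * x + (-(a*b)/(4*q)) := by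
    intro x; field_simp; ring
  rw [intervalIntegral.integral_congr (fun x _ => expand x)]
  have i2 : IntervalIntegrable (fun x : ℝ => (-(1/(4*q))) * x^2) volume a b :=
    ((continuous_const.mul (continuous_pow 2)).intervalIntegrable a b)
  have i1 : IntervalIntegrable (fun x : ℝ => ((a+b)/(4*q)) * x) volume a b :=
    ((continuous_const.mul continuous_id).intervalIntegrable a b)
  have i0 : IntervalIntegrable (fun _ : ℝ => (-(a*b)/(4*q))) volume a b :=
    (continuous_const.intervalIntegrable a b)
  rw [intervalIntegral.integral_add (i2.add i1) i0, intervalIntegral.integral_add i2 i1,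
    intervalIntegral.integral_const_mul, intervalIntegral.integral_const_mul,
    integral_pow, integral_id, intervalIntegral.integral_const]
  rw [ha, hb, hq']
  norm_num
  field_simp
  ring
end

section
/- Let q = 1/2 and let T, S be real numbers with 0 < T < 1 and −1 < S < 0 (a Stag Hunt game). Then the number of distinct roots in [0,1] of the polynomial P_{q,T,S}(x) = (T+S−1)x³ + (1−T−2S+q(S−1−T))x² + (S+q(T−S))x equals 3 if T + S < 0, and equals 2 if T + S ≥ 0; in the first case the roots are 0, 1/2, and (T+S)/(T+S−1) ∈ (0,1). -/
open MeasureTheory Set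

lemma P_factor (T S x : ℝ) (h : T + S - 1 ≠ 0) :
    P (1 / 2) T S x = (T + S - 1) * x * (x - 1 / 2) * (x - (T + S) / (T + S - 1)) := by
  unfold P
  field_simp
  ring

theorem SH_q_half (T S : ℝ) (hT0 : 0 < T) (hT1 : T < 1) (hS0 : -1 < S) (hS1 : S < 0) :
    (T + S < 0 →
      nRoots (1 / 2) T S = 3 ∧
        {x : ℝ | x ∈ Set.Icc (0 : ℝ) 1 ∧ P (1 / 2) T S x = 0} =
          {0, 1 / 2, (T + S) / (T + S - 1)} ∧
        (T + S) / (T + S - 1) ∈ Ioo (0 : ℝ) 1) ∧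
    (T + S ≥ 0 → nRoots (1 / 2) T S = 2) := by
  have hden : T + S - 1 < 0 := by linarith
  have hden' : T + S - 1 ≠ 0 := ne_of_lt hden
  set r : ℝ := (T + S) / (T + S - 1) with hr
  have hfac : ∀ x : ℝ, P (1/2) T S x = (T + S - 1) * x * (x - 1/2) * (x - r) :=
    fun x => P_factor T S x hden'
  have hroot : ∀ x : ℝ, P (1/2) T S x = 0 ↔ x = 0 ∨ x = 1/2 ∨ x = r := by
    intro x
    rw [hfac x]
    constructor
    · intro h
      rcases mul_eq_zero.1 h with h1 | h1
      · rcases mul_eq_zero.1 h1 with h2 | h2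
        · rcases mul_eq_zero.1 h2 with h3 | h3
          · exact absurd h3 hden'
          · exact Or.inl h3
        · exact Or.inr (Or.inl (by linarith))
      · exact Or.inr (Or.inr (by linarith))
    · rintro (rfl | rfl | rfl) <;> ring
  constructor
  · intro hTS
    have hr0 : 0 < r := div_pos_of_neg_of_neg hTS hden
    have hr1 : r < 1 := by
      rw [hr, div_lt_one_of_neg hden]; linarith
    have hrhalf : r ≠ 1/2 := by
      intro h
      rw [hr, div_eq_iff hden'] at h
      have : T + S = -1 := by linarith
      linarith
    have hset : {x : ℝ | x ∈ Set.Icc (0 : ℝ) 1 ∧ P (1/2) T S x = 0} = {0, 1/2, r} := by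
      ext x
      simp only [mem_setOf_eq, mem_Icc, mem_insert_iff, mem_singleton_iff]
      constructor
      · rintro ⟨_, hP⟩
        exact (hroot x).1 hP
      · rintro (rfl | rfl | rfl)
        · exact ⟨⟨le_refl 0, zero_le_one⟩, (hroot 0).2 (Or.inl rfl)⟩
        · exact ⟨⟨by norm_num, by norm_num⟩, (hroot (1/2)).2 (Or.inr (Or.inl rfl))⟩
        · exact ⟨⟨le_of_lt hr0, le_of_lt hr1⟩, (hroot r).2 (Or.inr (Or.inr rfl))⟩
    refine ⟨?_, hset, ⟨hr0, hr1⟩⟩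
    rw [nRoots, hset]
    rw [Set.ncard_eq_three]
    exact ⟨0, 1/2, r, by norm_num, ne_of_lt hr0, fun h => hrhalf h.symm, rfl⟩
  · intro hTS
    have hrle : r ≤ 0 := div_nonpos_of_nonneg_of_nonpos hTS (le_of_lt hden)
    have hset : {x : ℝ | x ∈ Set.Icc (0 : ℝ) 1 ∧ P (1/2) T S x = 0} = {0, 1/2} := by
      ext x
      simp only [mem_setOf_eq, mem_Icc, mem_insert_iff, mem_singleton_iff]
      constructor
      · rintro ⟨⟨hx0, _⟩, hP⟩
        rcases (hroot x).1 hP with h | h | h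
        · exact Or.inl h
        · exact Or.inr h
        · exact Or.inl (le_antisymm (h ▸ hrle) hx0)
      · rintro (rfl | rfl)
        · exact ⟨⟨le_refl 0, zero_le_one⟩, (hroot 0).2 (Or.inl rfl)⟩
        · exact ⟨⟨by norm_num, by norm_num⟩, (hroot (1/2)).2 (Or.inr (Or.inl rfl))⟩
    rw [nRoots, hset, Set.ncard_pair (by norm_num : (0:ℝ) ≠ 1/2)]
end
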